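/- arXiv:2311.11326 — 3 statements merged into one kernel-verified Lean document; each statement's English description precedes it below -/
import Mathlib

section
/- For every integer d ≥ 3, the integral ∫₀^∞ [I₀(x/d)]^d e^{−x} dx is equal to the Lauricella series F_C^{(d)}(1, 1/2; 1, …, 1; 1/d², …, 1/d²), i.e. ∫₀^∞ (∑_{k≥0} (x/(2d))^{2k}/(k!)²)^d e^{−x} dx = ∑_{k₁≥0} ⋯ ∑_{k_d≥0} (1)_{k₁+⋯+k_d} (1/2)_{k₁+⋯+k_d} / ((k₁)!² ⋯ (k_d)!² · d^{2(k₁+⋯+k_d)}), where both sides are finite. -/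
open MeasureTheory Real Finset

noncomputable def besselI0 (x : ℝ) : ℝ :=
  ∑' k : ℕ, (x / 2) ^ (2 * k) / ((k.factorial : ℝ)) ^ 2

lemma bterm_nonneg (x : ℝ) (k : ℕ) : 0 ≤ (x / 2) ^ (2 * k) / ((k.factorial : ℝ)) ^ 2 := by
  apply div_nonneg (even_two_mul k |>.pow_nonneg _) (by positivity)

lemma one_le_factorial (k : ℕ) : (1 : ℝ) ≤ (k.factorial : ℝ) := by
  exact_mod_cast k.factorial_pos

lemma besselI0_summable (x : ℝ) :
    Summable (fun k : ℕ => (x / 2) ^ (2 * k) / ((k.factorial : ℝ)) ^ 2) := by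
  refine Summable.of_nonneg_of_le (bterm_nonneg x) (fun k => ?_)
    (Real.summable_pow_div_factorial (x ^ 2 / 4))
  have h1 : (x / 2) ^ (2 * k) = (x ^ 2 / 4) ^ k := by
    rw [pow_mul]; ring_nf
  rw [h1]
  refine div_le_div_of_nonneg_left (by positivity) (by positivity) ?_
  calc (k.factorial : ℝ) = k.factorial * 1 := by ring
    _ ≤ (k.factorial : ℝ) ^ 2 := by
        rw [sq]
        exact mul_le_mul_of_nonneg_left (one_le_factorial k) (by positivity)

lemma besselI0_nonneg (x : ℝ) : 0 ≤ besselI0 x := tsum_nonneg (bterm_nonneg x)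

lemma centralBinom_sq (k : ℕ) : (Nat.centralBinom k) ^ 2 * (k + 1) ≤ 16 ^ k := by
  induction k with
  | zero => simp [Nat.centralBinom]
  | succ k ih =>
    have h := Nat.succ_mul_centralBinom_succ k
    have key : (k + 1) ^ 3 * ((Nat.centralBinom (k + 1)) ^ 2 * (k + 2)) ≤
        (k + 1) ^ 3 * 16 ^ (k + 1) := by
      have h2 : (k + 1) ^ 2 * (Nat.centralBinom (k + 1)) ^ 2 =
          (2 * (2 * k + 1)) ^ 2 * (Nat.centralBinom k) ^ 2 := by
        rw [← mul_pow, h, mul_pow]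
      have h3 : (2 * (2 * k + 1)) ^ 2 * (k + 2) ≤ 16 * (k + 1) ^ 3 := by nlinarith
      calc (k + 1) ^ 3 * ((Nat.centralBinom (k + 1)) ^ 2 * (k + 2))
          = (k + 1) * ((k + 1) ^ 2 * (Nat.centralBinom (k + 1)) ^ 2) * (k + 2) := by ring
        _ = (2 * (2 * k + 1)) ^ 2 * (k + 2) * ((Nat.centralBinom k) ^ 2 * (k + 1)) := by
            rw [h2]; ring
        _ ≤ (16 * (k + 1) ^ 3) * 16 ^ k := by
            exact Nat.mul_le_mul h3 ih
        _ = (k + 1) ^ 3 * 16 ^ (k + 1) := by rw [pow_succ]; ring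
    exact Nat.le_of_mul_le_mul_left key (by positivity)

/-- `(2k)! * √(k+1) ≤ 4^k * (k!)^2` -/
lemma factorial_sqrt_bound (k : ℕ) :
    ((2 * k).factorial : ℝ) * Real.sqrt (k + 1) ≤ 4 ^ k * (k.factorial : ℝ) ^ 2 := by
  have hc : ((2 * k).factorial : ℝ) = Nat.centralBinom k * (k.factorial : ℝ) ^ 2 := by
    rw [Nat.centralBinom]
    have := Nat.choose_mul_factorial_mul_factorial (show k ≤ 2 * k by omega)
    have h2 : 2 * k - k = k := by omega
    rw [h2] at this
    push_cast [← this]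
    ring
  have hsq : (Nat.centralBinom k : ℝ) * Real.sqrt (k + 1) ≤ 4 ^ k := by
    have h1 : ((Nat.centralBinom k : ℝ) * Real.sqrt (k + 1)) ^ 2 ≤ ((4 : ℝ) ^ k) ^ 2 := by
      have hb' : ((Nat.centralBinom k : ℝ)) ^ 2 * ((k : ℝ) + 1) ≤ 16 ^ k := by
        exact_mod_cast centralBinom_sq k
      rw [mul_pow, Real.sq_sqrt (by positivity)]
      calc (Nat.centralBinom k : ℝ) ^ 2 * ((k : ℝ) + 1) ≤ 16 ^ k := hb'
        _ = ((4 : ℝ) ^ k) ^ 2 := by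
            rw [← pow_mul, mul_comm k 2, pow_mul]; norm_num
    have h2 := Real.sqrt_le_sqrt h1
    rwa [Real.sqrt_sq (by positivity), Real.sqrt_sq (by positivity)] at h2
  calc ((2 * k).factorial : ℝ) * Real.sqrt (k + 1)
      = (Nat.centralBinom k * Real.sqrt (k + 1)) * (k.factorial : ℝ) ^ 2 := by rw [hc]; ring
    _ ≤ 4 ^ k * (k.factorial : ℝ) ^ 2 := by gcongr

lemma pow_div_factorial_le_exp {x : ℝ} (hx : 0 ≤ x) (n : ℕ) :
    x ^ n / (n.factorial : ℝ) ≤ Real.exp x := by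
  calc x ^ n / (n.factorial : ℝ) ≤ ∑ i ∈ range (n + 1), x ^ i / (i.factorial : ℝ) := by
        refine Finset.single_le_sum (f := fun i => x ^ i / (i.factorial : ℝ)) ?_ ?_
        · intro i _; positivity
        · simp
    _ ≤ Real.exp x := Real.sum_le_exp_of_nonneg hx _

lemma cterm_nonneg (x : ℝ) (k : ℕ) : 0 ≤ x ^ (2 * k) / ((2 * k).factorial : ℝ) :=
  div_nonneg (even_two_mul k |>.pow_nonneg _) (by positivity)

lemma cosh_summable (x : ℝ) : Summable (fun k : ℕ => x ^ (2 * k) / ((2 * k).factorial : ℝ)) := by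
  refine Summable.of_nonneg_of_le (cterm_nonneg x) (fun k => ?_)
    (Real.summable_pow_div_factorial (x ^ 2))
  rw [pow_mul]
  refine div_le_div_of_nonneg_left (by positivity) (by positivity) ?_
  exact_mod_cast Nat.factorial_le (by omega)

lemma cosh_tsum_le {x : ℝ} (hx : 0 ≤ x) :
    ∑' k : ℕ, x ^ (2 * k) / ((2 * k).factorial : ℝ) ≤ Real.exp x := by
  have hexp : Real.exp x = ∑' n : ℕ, x ^ n / (n.factorial : ℝ) := by
    rw [Real.exp_eq_exp_ℝ, NormedSpace.exp_eq_tsum_div]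
  rw [hexp]
  refine (cosh_summable x).tsum_le_tsum_of_inj (fun k => 2 * k) (fun a b hab => by
      dsimp at hab; omega) (fun c _ => by positivity) (fun k => le_rfl)
    (Real.summable_pow_div_factorial x)

lemma halfpow (t : ℝ) (k : ℕ) : (t / 2) ^ (2 * k) = t ^ (2 * k) / 4 ^ k := by
  rw [div_pow, pow_mul, pow_mul]; norm_num

lemma fact2_le (i : ℕ) : ((2 * i).factorial : ℝ) ≤ 4 ^ i * (i.factorial : ℝ) ^ 2 := by
  have h := factorial_sqrt_bound i
  have hs1 : (1 : ℝ) ≤ Real.sqrt ((i : ℝ) + 1) := by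
    rw [Real.one_le_sqrt]; push_cast; linarith
  calc ((2 * i).factorial : ℝ) = (2 * i).factorial * 1 := (mul_one _).symm
    _ ≤ ((2 * i).factorial : ℝ) * Real.sqrt ((i : ℝ) + 1) :=
        mul_le_mul_of_nonneg_left hs1 (by positivity)
    _ ≤ 4 ^ i * (i.factorial : ℝ) ^ 2 := h

lemma bterm_le_cterm (t : ℝ) (k : ℕ) :
    (t / 2) ^ (2 * k) / ((k.factorial : ℝ)) ^ 2 ≤ t ^ (2 * k) / ((2 * k).factorial : ℝ) := by
  rw [halfpow, div_div]
  exact div_le_div_of_nonneg_left (even_two_mul k |>.pow_nonneg _) (by positivity) (fact2_le k)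

lemma bterm_le_cterm_sqrt (t : ℝ) (k : ℕ) :
    (t / 2) ^ (2 * k) / ((k.factorial : ℝ)) ^ 2 ≤
      t ^ (2 * k) / (((2 * k).factorial : ℝ) * Real.sqrt (k + 1)) := by
  rw [halfpow, div_div]
  exact div_le_div_of_nonneg_left (even_two_mul k |>.pow_nonneg _) (by positivity)
    (factorial_sqrt_bound k)

lemma besselI0_le_exp {t : ℝ} (ht : 0 ≤ t) : besselI0 t ≤ Real.exp t :=
  calc besselI0 t ≤ ∑' k : ℕ, t ^ (2 * k) / ((2 * k).factorial : ℝ) :=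
        (besselI0_summable t).tsum_le_tsum (fun k => bterm_le_cterm t k) (cosh_summable t)
    _ ≤ Real.exp t := cosh_tsum_le ht

set_option maxHeartbeats 1000000 in
/-- The crucial decay estimate: `I₀(t) ≤ 800 e^t / √t` for `t ≥ 1`. -/
lemma besselI0_le_sqrt {t : ℝ} (ht : 1 ≤ t) :
    besselI0 t ≤ 800 * Real.exp t / Real.sqrt t := by
  have ht0 : (0:ℝ) < t := by linarith
  set K : ℕ := ⌊t / 8⌋₊ with hK
  have hKle : (K : ℝ) ≤ t / 8 := Nat.floor_le (by positivity)
  have hKgt : t / 8 < K + 1 := Nat.lt_floor_add_one _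
  have hsum := besselI0_summable t
  have hsplit := Summable.sum_add_tsum_nat_add (K + 1) hsum
  -- head bound
  have head_bound : ∑ i ∈ range (K + 1), (t / 2) ^ (2 * i) / ((i.factorial : ℝ)) ^ 2 ≤
      768 * Real.exp t / t ^ 2 := by
    have hterm : ∀ i ∈ range (K + 1), (t / 2) ^ (2 * i) / ((i.factorial : ℝ)) ^ 2 ≤
        4 ^ K * Real.exp (t / 2) := by
      intro i hi
      have hiK : i ≤ K := by simpa [Nat.lt_succ_iff] using mem_range.1 hi
      have e1 : (t / 2) ^ (2 * i) / ((i.factorial : ℝ)) ^ 2 ≤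
          4 ^ i * ((t / 2) ^ (2 * i) / ((2 * i).factorial : ℝ)) := by
        have hnn : (0:ℝ) ≤ (t / 2) ^ (2 * i) := even_two_mul i |>.pow_nonneg _
        rw [mul_div_assoc', div_le_div_iff₀ (by positivity) (by positivity)]
        calc (t / 2) ^ (2 * i) * ((2 * i).factorial : ℝ)
            ≤ (t / 2) ^ (2 * i) * (4 ^ i * (i.factorial : ℝ) ^ 2) :=
              mul_le_mul_of_nonneg_left (fact2_le i) hnn
          _ = 4 ^ i * (t / 2) ^ (2 * i) * (i.factorial : ℝ) ^ 2 := by ring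
      have e2 : (t / 2) ^ (2 * i) / ((2 * i).factorial : ℝ) ≤ Real.exp (t / 2) :=
        pow_div_factorial_le_exp (by linarith) (2 * i)
      calc (t / 2) ^ (2 * i) / ((i.factorial : ℝ)) ^ 2
          ≤ 4 ^ i * ((t / 2) ^ (2 * i) / ((2 * i).factorial : ℝ)) := e1
        _ ≤ 4 ^ K * Real.exp (t / 2) := by
            have h4 : (4:ℝ) ^ i ≤ 4 ^ K := pow_le_pow_right₀ (by norm_num) hiK
            have hpos : (0:ℝ) ≤ (t / 2) ^ (2 * i) / ((2 * i).factorial : ℝ) := by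
              exact div_nonneg (even_two_mul i |>.pow_nonneg _) (by positivity)
            exact mul_le_mul h4 e2 hpos (by positivity)
    have hsum_le : ∑ i ∈ range (K + 1), (t / 2) ^ (2 * i) / ((i.factorial : ℝ)) ^ 2 ≤
        (K + 1 : ℝ) * (4 ^ K * Real.exp (t / 2)) := by
      have := Finset.sum_le_card_nsmul (range (K + 1)) _ _ hterm
      simpa [nsmul_eq_mul] using this
    have hK1 : (K + 1 : ℝ) ≤ 2 * t := by linarith
    have h4K : (4:ℝ) ^ K ≤ Real.exp (t * (Real.log 2 / 4)) := by
      have h4pos : (0:ℝ) < 4 ^ K := by positivity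
      rw [← Real.exp_log h4pos, Real.exp_le_exp, Real.log_pow]
      have hlog4 : Real.log 4 = 2 * Real.log 2 := by
        rw [show (4:ℝ) = 2 ^ 2 by norm_num, Real.log_pow]; push_cast; ring
      rw [hlog4]
      have hl2 : 0 ≤ Real.log 2 := Real.log_nonneg (by norm_num)
      calc (K:ℝ) * (2 * Real.log 2) ≤ (t / 8) * (2 * Real.log 2) := by
            exact mul_le_mul_of_nonneg_right hKle (by positivity)
        _ = t * (Real.log 2 / 4) := by ring
    have hcube : t ^ 3 ≤ 384 * Real.exp (t / 4) := by
      have := pow_div_factorial_le_exp (show (0:ℝ) ≤ t / 4 by linarith) 3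
      have h6 : ((Nat.factorial 3 : ℕ) : ℝ) = 6 := by norm_num [Nat.factorial]
      rw [h6] at this
      nlinarith [this]
    have hexp_comb : Real.exp (t / 2) * Real.exp (t * (Real.log 2 / 4)) ≤ Real.exp (3 * t / 4) := by
      rw [← Real.exp_add, Real.exp_le_exp]
      have hl2 : Real.log 2 ≤ 1 := by
        have := Real.log_two_lt_d9; linarith
      nlinarith
    calc ∑ i ∈ range (K + 1), (t / 2) ^ (2 * i) / ((i.factorial : ℝ)) ^ 2
        ≤ (K + 1 : ℝ) * (4 ^ K * Real.exp (t / 2)) := hsum_le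
      _ ≤ (2 * t) * (Real.exp (t * (Real.log 2 / 4)) * Real.exp (t / 2)) := by
          refine mul_le_mul hK1 ?_ (by positivity) (by linarith)
          exact mul_le_mul_of_nonneg_right h4K (Real.exp_pos _).le
      _ ≤ (2 * t) * Real.exp (3 * t / 4) := by
          refine mul_le_mul_of_nonneg_left ?_ (by linarith)
          rw [mul_comm]; exact hexp_comb
      _ ≤ 768 * Real.exp t / t ^ 2 := by
          rw [le_div_iff₀ (by positivity)]
          have hsplit' : Real.exp t = Real.exp (3 * t / 4) * Real.exp (t / 4) := by
            rw [← Real.exp_add]; ring_nf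
          rw [hsplit']
          nlinarith [Real.exp_pos (3 * t / 4), Real.exp_pos (t / 4), hcube,
            mul_pos ht0 (mul_pos ht0 ht0)]
  -- tail bound
  have tail_bound : ∑' i : ℕ, (t / 2) ^ (2 * (i + (K + 1))) / (((i + (K + 1)).factorial : ℝ)) ^ 2 ≤
      3 * Real.exp t / Real.sqrt t := by
    have hshift_sum : Summable (fun i : ℕ =>
        (t / 2) ^ (2 * (i + (K + 1))) / (((i + (K + 1)).factorial : ℝ)) ^ 2) :=
      (summable_nat_add_iff (f := fun k : ℕ => (t / 2) ^ (2 * k) / ((k.factorial : ℝ)) ^ 2)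
        (K + 1)).2 hsum
    have hcshift : Summable (fun i : ℕ =>
        t ^ (2 * (i + (K + 1))) / (((2 * (i + (K + 1))).factorial : ℝ))) :=
      (summable_nat_add_iff (f := fun k : ℕ => t ^ (2 * k) / (((2 * k).factorial : ℝ)))
        (K + 1)).2 (cosh_summable t)
    have step1 : ∀ i : ℕ,
        (t / 2) ^ (2 * (i + (K + 1))) / (((i + (K + 1)).factorial : ℝ)) ^ 2 ≤
        (1 / Real.sqrt (K + 2)) * (t ^ (2 * (i + (K + 1))) / ((2 * (i + (K + 1))).factorial : ℝ)) := by
      intro i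
      refine (bterm_le_cterm_sqrt t (i + (K + 1))).trans ?_
      rw [one_div, ← div_eq_inv_mul, div_div]
      refine div_le_div_of_nonneg_left (even_two_mul _ |>.pow_nonneg _) (by positivity) ?_
      refine mul_le_mul_of_nonneg_left ?_ (by positivity)
      refine Real.sqrt_le_sqrt ?_
      push_cast; linarith
    have step2 : ∑' i : ℕ, (t ^ (2 * (i + (K + 1))) / ((2 * (i + (K + 1))).factorial : ℝ)) ≤
        Real.exp t := by
      have hs := Summable.sum_add_tsum_nat_add (K + 1) (cosh_summable t)
      have hhead : 0 ≤ ∑ i ∈ range (K + 1), t ^ (2 * i) / ((2 * i).factorial : ℝ) :=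
        Finset.sum_nonneg (fun i _ => cterm_nonneg t i)
      have := cosh_tsum_le (le_of_lt ht0)
      linarith
    have hsqle : (1 : ℝ) / Real.sqrt (K + 2) ≤ 3 / Real.sqrt t := by
      rw [div_le_div_iff₀ (by positivity) (by positivity)]
      have h1 : Real.sqrt t ≤ Real.sqrt (9 * ((K:ℝ) + 2)) := by
        refine Real.sqrt_le_sqrt ?_
        nlinarith [hKgt]
      calc 1 * Real.sqrt t ≤ Real.sqrt (9 * ((K:ℝ) + 2)) := by linarith
        _ = 3 * Real.sqrt ((K:ℝ) + 2) := by
            rw [show (9:ℝ) * ((K:ℝ) + 2) = 3 ^ 2 * ((K:ℝ)+2) by ring, Real.sqrt_mul (by positivity),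
              Real.sqrt_sq (by norm_num)]
        _ = 3 * Real.sqrt ((K:ℝ) + 2) := rfl
    calc ∑' i : ℕ, (t / 2) ^ (2 * (i + (K + 1))) / (((i + (K + 1)).factorial : ℝ)) ^ 2
        ≤ ∑' i : ℕ, (1 / Real.sqrt (K + 2)) *
            (t ^ (2 * (i + (K + 1))) / ((2 * (i + (K + 1))).factorial : ℝ)) := by
          exact hshift_sum.tsum_le_tsum step1 (hcshift.mul_left _)
      _ = (1 / Real.sqrt (K + 2)) *
            ∑' i : ℕ, (t ^ (2 * (i + (K + 1))) / ((2 * (i + (K + 1))).factorial : ℝ)) :=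
          tsum_mul_left
      _ ≤ (3 / Real.sqrt t) * Real.exp t := by
          refine mul_le_mul hsqle step2 ?_ (by positivity)
          exact tsum_nonneg (fun i => cterm_nonneg t _)
      _ = 3 * Real.exp t / Real.sqrt t := by ring
  -- combine
  have hfinal : besselI0 t = (∑ i ∈ range (K + 1), (t / 2) ^ (2 * i) / ((i.factorial : ℝ)) ^ 2) +
      ∑' i : ℕ, (t / 2) ^ (2 * (i + (K + 1))) / (((i + (K + 1)).factorial : ℝ)) ^ 2 := by
    rw [besselI0]; linarith [hsplit]
  have hsq1 : Real.sqrt t ≤ t ^ 2 := by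
    have h := Real.sqrt_le_sqrt (show t ≤ (t ^ 2) ^ 2 by nlinarith [sq_nonneg t, sq_nonneg (t - 1), sq_nonneg (t ^ 2 - 1)])
    rwa [Real.sqrt_sq (by positivity)] at h
  have h768 : 768 * Real.exp t / t ^ 2 ≤ 768 * Real.exp t / Real.sqrt t := by
    exact div_le_div_of_nonneg_left (by positivity) (by positivity) hsq1
  rw [hfinal]
  calc _ ≤ 768 * Real.exp t / t ^ 2 + 3 * Real.exp t / Real.sqrt t := by
        exact add_le_add head_bound tail_bound
    _ ≤ 768 * Real.exp t / Real.sqrt t + 3 * Real.exp t / Real.sqrt t := by linarith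
    _ ≤ 800 * Real.exp t / Real.sqrt t := by
        rw [← add_div, div_le_div_iff₀ (by positivity) (by positivity)]
        nlinarith [Real.exp_pos t, Real.sqrt_pos.2 ht0]

lemma besselI0_measurable : Measurable besselI0 := by
  have h : ∀ n : ℕ, Measurable (fun x : ℝ =>
      ∑ k ∈ range n, (x / 2) ^ (2 * k) / ((k.factorial : ℝ)) ^ 2) := by
    intro n
    apply Finset.measurable_sum
    intro k _
    exact ((measurable_id.div_const 2).pow_const _).div_const _
  apply measurable_of_tendsto_metrizable h
  rw [tendsto_pi_nhds]
  intro x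
  exact (besselI0_summable x).hasSum.tendsto_sum_nat

lemma ascPochhammer_half (n : ℕ) :
    (ascPochhammer ℝ n).eval (1 / 2 : ℝ) = ((2 * n).factorial : ℝ) / (4 ^ n * n.factorial) := by
  induction n with
  | zero => simp [ascPochhammer_zero]
  | succ n ih =>
    rw [ascPochhammer_succ_eval, ih]
    have h1 : (2 * (n + 1)).factorial = (2 * n + 2) * ((2 * n + 1) * (2 * n).factorial) := by
      rw [show 2 * (n + 1) = (2 * n + 1) + 1 by ring, Nat.factorial_succ,
        show (2 * n + 1) = (2 * n) + 1 from rfl, Nat.factorial_succ]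
    have h2 : (n + 1).factorial = (n + 1) * n.factorial := Nat.factorial_succ n
    rw [h1, h2]
    have hf : ((n.factorial : ℝ)) ≠ 0 := by positivity
    push_cast
    field_simp
    ring

open ENNReal in
lemma tsum_pi_fin (n : ℕ) (f : ℕ → ℝ≥0∞) :
    ∑' k : Fin n → ℕ, ∏ j, f (k j) = (∑' m : ℕ, f m) ^ n := by
  induction n with
  | zero =>
    rw [pow_zero]
    rw [tsum_eq_single (fun _ => 0) (by intro b hb; exact absurd (Subsingleton.elim b _) hb)]
    simp
  | succ n ih =>
    have he := (Fin.consEquiv (fun _ : Fin (n + 1) => ℕ)).tsum_eq (f := fun k : Fin (n + 1) → ℕ => ∏ j, f (k j))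
    rw [← he]
    have hval : ∀ p : ℕ × (Fin n → ℕ),
        (∏ j, f (((Fin.consEquiv (fun _ : Fin (n + 1) => ℕ)) p) j)) = f p.1 * ∏ j, f (p.2 j) := by
      intro p
      rw [Fin.prod_univ_succ]
      simp [Fin.consEquiv]
    calc ∑' p : ℕ × (Fin n → ℕ), ∏ j, f (((Fin.consEquiv (fun _ : Fin (n + 1) => ℕ)) p) j)
        = ∑' p : ℕ × (Fin n → ℕ), f p.1 * ∏ j, f (p.2 j) := by
          exact tsum_congr hval
      _ = ∑' (a : ℕ) (b : Fin n → ℕ), f a * ∏ j, f (b j) := ENNReal.tsum_prod'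
      _ = ∑' (a : ℕ), f a * ∑' (b : Fin n → ℕ), ∏ j, f (b j) := by
          exact tsum_congr fun a => ENNReal.tsum_mul_left
      _ = (∑' m, f m) * ∑' (b : Fin n → ℕ), ∏ j, f (b j) := ENNReal.tsum_mul_right
      _ = (∑' m, f m) ^ (n + 1) := by rw [ih, pow_succ]; ring

lemma integrable_pow_mul_exp (m : ℕ) :
    IntegrableOn (fun x : ℝ => x ^ m * Real.exp (-x)) (Set.Ioi 0) := by
  have h := Real.GammaIntegral_convergent (s := m + 1) (by positivity)
  refine (h.congr_fun ?_ measurableSet_Ioi)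
  intro x hx
  show Real.exp (-x) * x ^ ((m : ℝ) + 1 - 1) = x ^ m * Real.exp (-x)
  rw [show (m : ℝ) + 1 - 1 = (m : ℝ) by ring, Real.rpow_natCast, mul_comm]

lemma integral_pow_mul_exp (m : ℕ) :
    ∫ x in Set.Ioi (0 : ℝ), x ^ m * Real.exp (-x) = (m.factorial : ℝ) := by
  have h := Real.Gamma_eq_integral (s := m + 1) (by positivity)
  rw [Real.Gamma_nat_eq_factorial] at h
  rw [h]
  refine setIntegral_congr_fun measurableSet_Ioi (fun x hx => ?_)
  show x ^ m * Real.exp (-x) = Real.exp (-x) * x ^ ((m : ℝ) + 1 - 1)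
  rw [show (m : ℝ) + 1 - 1 = (m : ℝ) by ring, Real.rpow_natCast, mul_comm]

lemma lintegral_pow_mul_exp (m : ℕ) :
    ∫⁻ x in Set.Ioi (0 : ℝ), ENNReal.ofReal (x ^ m * Real.exp (-x)) =
      ENNReal.ofReal (m.factorial : ℝ) := by
  rw [← integral_pow_mul_exp m]
  refine (MeasureTheory.ofReal_integral_eq_lintegral_ofReal (integrable_pow_mul_exp m) ?_).symm
  refine (ae_restrict_iff' measurableSet_Ioi).2 (Filter.Eventually.of_forall fun x hx => ?_)
  have hx0 : (0:ℝ) < x := hx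
  positivity

set_option maxHeartbeats 2000000 in
/-- For every integer `d ≥ 3`, `∫₀^∞ [I₀(x/d)]^d e^{-x} dx` equals the Lauricella series
`F_C^{(d)}(1, 1/2; 1, …, 1; 1/d², …, 1/d²)`, both sides being finite. -/
theorem integral_besselI0_pow_eq_lauricellaFC (d : ℕ) (hd : 3 ≤ d) :
    IntegrableOn (fun x : ℝ => (besselI0 (x / d)) ^ d * Real.exp (-x)) (Set.Ioi 0) ∧
    Summable (fun k : Fin d → ℕ =>
      (ascPochhammer ℝ (∑ j, k j)).eval 1 * (ascPochhammer ℝ (∑ j, k j)).eval (1 / 2) /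
        ((∏ j, ((k j).factorial : ℝ) ^ 2) * (d : ℝ) ^ (2 * ∑ j, k j))) ∧
    (∫ x in Set.Ioi (0 : ℝ), (besselI0 (x / d)) ^ d * Real.exp (-x)) =
      ∑' k : Fin d → ℕ,
        (ascPochhammer ℝ (∑ j, k j)).eval 1 * (ascPochhammer ℝ (∑ j, k j)).eval (1 / 2) /
          ((∏ j, ((k j).factorial : ℝ) ^ 2) * (d : ℝ) ^ (2 * ∑ j, k j)) := by
  have hdn : 0 < d := by omega
  have hd0 : (0 : ℝ) < (d : ℝ) := by exact_mod_cast hdn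
  set h : ℝ → ℝ := fun x => (besselI0 (x / d)) ^ d * Real.exp (-x) with hh
  -- measurability and nonnegativity
  have hmeas : Measurable h :=
    ((besselI0_measurable.comp (measurable_id.div_const _)).pow_const d).mul
      (Real.measurable_exp.comp measurable_neg)
  have hnonneg : ∀ x, 0 ≤ h x := fun x =>
    mul_nonneg (pow_nonneg (besselI0_nonneg _) _) (Real.exp_pos _).le
  -- integrability
  have hIoc : IntegrableOn h (Set.Ioc 0 (d : ℝ)) := by
    refine Integrable.mono' (g := fun _ => (1 : ℝ))
      (integrableOn_const measure_Ioc_lt_top.ne) hmeas.aestronglyMeasurable ?_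
    filter_upwards [ae_restrict_mem measurableSet_Ioc] with x hx
    rw [Real.norm_eq_abs, abs_of_nonneg (hnonneg x)]
    have hx0 : (0 : ℝ) < x := hx.1
    have hb := besselI0_le_exp (t := x / d) (by positivity)
    calc h x ≤ (Real.exp (x / d)) ^ d * Real.exp (-x) := by
          refine mul_le_mul_of_nonneg_right ?_ (Real.exp_pos _).le
          exact pow_le_pow_left₀ (besselI0_nonneg _) hb d
      _ = 1 := by
          rw [← Real.exp_nat_mul, ← Real.exp_add]
          have : (d : ℝ) * (x / d) + -x = 0 := by field_simp; ring
          rw [this, Real.exp_zero]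
  have hIoi : IntegrableOn h (Set.Ioi (d : ℝ)) := by
    have hint : IntegrableOn
        (fun x : ℝ => (800 ^ 3 * (d : ℝ) ^ ((3:ℝ)/2)) * x ^ (-((3:ℝ)/2))) (Set.Ioi (d : ℝ)) :=
      (integrableOn_Ioi_rpow_of_lt (by norm_num) hd0).const_mul _
    refine Integrable.mono' hint hmeas.aestronglyMeasurable ?_
    filter_upwards [ae_restrict_mem measurableSet_Ioi] with x hx
    rw [Real.norm_eq_abs, abs_of_nonneg (hnonneg x)]
    have hx0 : (0 : ℝ) < x := hd0.trans hx
    have ht1 : 1 ≤ x / d := (one_le_div hd0).2 (le_of_lt hx)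
    have ht0 : (0 : ℝ) < x / d := by linarith
    set t := x / d with hether
    have hg0 : (0 : ℝ) ≤ besselI0 t * Real.exp (-t) :=
      mul_nonneg (besselI0_nonneg _) (Real.exp_pos _).le
    have hg1 : besselI0 t * Real.exp (-t) ≤ 1 := by
      have := besselI0_le_exp (le_of_lt ht0)
      calc besselI0 t * Real.exp (-t) ≤ Real.exp t * Real.exp (-t) :=
            mul_le_mul_of_nonneg_right this (Real.exp_pos _).le
        _ = 1 := by rw [← Real.exp_add]; simp
    have hhx : h x = (besselI0 t * Real.exp (-t)) ^ d := by
      rw [hh, mul_pow, ← Real.exp_nat_mul]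
      have hdt : (d : ℝ) * t = x := by rw [hether]; field_simp
      rw [show (d : ℝ) * (-t) = -x by rw [mul_neg, hdt]]
    have hgs : besselI0 t * Real.exp (-t) ≤ 800 / Real.sqrt t := by
      have hb := besselI0_le_sqrt ht1
      calc besselI0 t * Real.exp (-t) ≤ (800 * Real.exp t / Real.sqrt t) * Real.exp (-t) :=
            mul_le_mul_of_nonneg_right hb (Real.exp_pos _).le
        _ = 800 / Real.sqrt t * (Real.exp t * Real.exp (-t)) := by ring
        _ = 800 / Real.sqrt t := by rw [← Real.exp_add]; simp
    have hcube : (besselI0 t * Real.exp (-t)) ^ d ≤ (800 / Real.sqrt t) ^ 3 := by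
      calc (besselI0 t * Real.exp (-t)) ^ d ≤ (besselI0 t * Real.exp (-t)) ^ 3 :=
            pow_le_pow_of_le_one hg0 hg1 hd
        _ ≤ (800 / Real.sqrt t) ^ 3 := by
            exact pow_le_pow_left₀ hg0 hgs 3
    have hsqrt3 : (Real.sqrt t) ^ 3 = t ^ ((3:ℝ)/2) := by
      rw [Real.sqrt_eq_rpow, ← Real.rpow_natCast (t ^ ((1:ℝ)/2)) 3, ← Real.rpow_mul ht0.le]
      norm_num
    have hfinal : (800 / Real.sqrt t) ^ 3 =
        (800 ^ 3 * (d : ℝ) ^ ((3:ℝ)/2)) * x ^ (-((3:ℝ)/2)) := by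
      rw [div_pow, hsqrt3]
      rw [show t = x / d from rfl, Real.div_rpow hx0.le hd0.le]
      rw [Real.rpow_neg hx0.le]
      field_simp
    calc h x ≤ (800 / Real.sqrt t) ^ 3 := hhx ▸ hcube
      _ = (800 ^ 3 * (d : ℝ) ^ ((3:ℝ)/2)) * x ^ (-((3:ℝ)/2)) := hfinal
  have hInt : IntegrableOn h (Set.Ioi (0 : ℝ)) := by
    have := hIoc.union hIoi
    rwa [Set.Ioc_union_Ioi_eq_Ioi hd0.le] at this
  -- the term functions
  set T : (Fin d → ℕ) → ℝ := fun k =>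
    ((2 * ∑ j, k j).factorial : ℝ) /
      ((2 * (d : ℝ)) ^ (2 * ∑ j, k j) * ∏ j, ((k j).factorial : ℝ) ^ 2) with hT
  have hTnonneg : ∀ k, 0 ≤ T k := by
    intro k
    have : (0:ℝ) < ∏ j, ((k j).factorial : ℝ) ^ 2 :=
      Finset.prod_pos fun j _ => by positivity
    positivity
  -- pointwise series expansion in ℝ≥0∞
  have hpt : ∀ x : ℝ, ENNReal.ofReal (h x) =
      ∑' k : Fin d → ℕ, ENNReal.ofReal
        ((∏ j, (x / (2 * (d:ℝ))) ^ (2 * k j) / ((k j).factorial : ℝ) ^ 2) * Real.exp (-x)) := by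
    intro x
    have hterm_nonneg : ∀ m : ℕ, 0 ≤ (x / (2 * (d:ℝ))) ^ (2 * m) / ((m.factorial : ℝ)) ^ 2 :=
      fun m => div_nonneg (even_two_mul m |>.pow_nonneg _) (by positivity)
    have hrw : ∀ m : ℕ, (x / (d:ℝ) / 2) ^ (2 * m) / ((m.factorial : ℝ)) ^ 2 =
        (x / (2 * (d:ℝ))) ^ (2 * m) / ((m.factorial : ℝ)) ^ 2 := by
      intro m; rw [div_div, mul_comm (d:ℝ) 2]
    have hsummable' : Summable
        (fun m : ℕ => (x / (2 * (d:ℝ))) ^ (2 * m) / ((m.factorial : ℝ)) ^ 2) :=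
      (besselI0_summable (x / d)).congr hrw
    have hb : ENNReal.ofReal (besselI0 (x / d)) =
        ∑' m : ℕ, ENNReal.ofReal ((x / (2 * (d:ℝ))) ^ (2 * m) / ((m.factorial : ℝ)) ^ 2) := by
      have h1 : besselI0 (x / d) =
          ∑' m : ℕ, (x / (2 * (d:ℝ))) ^ (2 * m) / ((m.factorial : ℝ)) ^ 2 :=
        tsum_congr hrw
      rw [h1, ENNReal.ofReal_tsum_of_nonneg hterm_nonneg hsummable']
    calc ENNReal.ofReal (h x)
        = ENNReal.ofReal (besselI0 (x / d)) ^ d * ENNReal.ofReal (Real.exp (-x)) := by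
          rw [hh]
          rw [ENNReal.ofReal_mul (pow_nonneg (besselI0_nonneg _) _),
            ENNReal.ofReal_pow (besselI0_nonneg _)]
      _ = (∑' k : Fin d → ℕ, ∏ j, ENNReal.ofReal
            ((x / (2 * (d:ℝ))) ^ (2 * k j) / ((k j).factorial : ℝ) ^ 2)) *
          ENNReal.ofReal (Real.exp (-x)) := by
          rw [hb, ← tsum_pi_fin d
            (fun m => ENNReal.ofReal ((x / (2 * (d:ℝ))) ^ (2 * m) / ((m.factorial : ℝ)) ^ 2))]
      _ = ∑' k : Fin d → ℕ, (∏ j, ENNReal.ofReal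
            ((x / (2 * (d:ℝ))) ^ (2 * k j) / ((k j).factorial : ℝ) ^ 2)) *
          ENNReal.ofReal (Real.exp (-x)) := ENNReal.tsum_mul_right.symm
      _ = ∑' k : Fin d → ℕ, ENNReal.ofReal
            ((∏ j, (x / (2 * (d:ℝ))) ^ (2 * k j) / ((k j).factorial : ℝ) ^ 2) * Real.exp (-x)) := by
          refine tsum_congr fun k => ?_
          rw [ENNReal.ofReal_mul (Finset.prod_nonneg fun j _ => hterm_nonneg (k j)),
            ENNReal.ofReal_prod_of_nonneg fun j _ => hterm_nonneg (k j)]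
  -- evaluating each term integral
  have hterm_int : ∀ k : Fin d → ℕ,
      (∫⁻ x in Set.Ioi (0:ℝ), ENNReal.ofReal
        ((∏ j, (x / (2 * (d:ℝ))) ^ (2 * k j) / ((k j).factorial : ℝ) ^ 2) * Real.exp (-x))) =
      ENNReal.ofReal (T k) := by
    intro k
    set n : ℕ := ∑ j, k j with hn
    set c : ℝ := 1 / ((2 * (d : ℝ)) ^ (2 * n) * ∏ j, ((k j).factorial : ℝ) ^ 2) with hc
    have hprod_pos : (0:ℝ) < ∏ j, ((k j).factorial : ℝ) ^ 2 :=
      Finset.prod_pos fun j _ => by positivity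
    have hc0 : 0 ≤ c := by positivity
    have hF : ∀ x : ℝ, (∏ j, (x / (2 * (d:ℝ))) ^ (2 * k j) / ((k j).factorial : ℝ) ^ 2) =
        c * x ^ (2 * n) := by
      intro x
      rw [Finset.prod_div_distrib]
      have h1 : (∏ j, (x / (2 * (d:ℝ))) ^ (2 * k j)) = (x / (2 * (d:ℝ))) ^ (2 * n) := by
        rw [hn, Finset.mul_sum, Finset.prod_pow_eq_pow_sum]
      rw [h1, div_pow, hc]
      field_simp
    calc (∫⁻ x in Set.Ioi (0:ℝ), ENNReal.ofReal
          ((∏ j, (x / (2 * (d:ℝ))) ^ (2 * k j) / ((k j).factorial : ℝ) ^ 2) * Real.exp (-x)))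
        = ∫⁻ x in Set.Ioi (0:ℝ), ENNReal.ofReal c *
            ENNReal.ofReal (x ^ (2 * n) * Real.exp (-x)) := by
          refine lintegral_congr fun x => ?_
          rw [hF x, mul_assoc, ENNReal.ofReal_mul hc0]
      _ = ENNReal.ofReal c * ∫⁻ x in Set.Ioi (0:ℝ),
            ENNReal.ofReal (x ^ (2 * n) * Real.exp (-x)) := by
          rw [lintegral_const_mul']
          exact ENNReal.ofReal_ne_top
      _ = ENNReal.ofReal c * ENNReal.ofReal (((2 * n).factorial : ℝ)) := by
          rw [lintegral_pow_mul_exp]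
      _ = ENNReal.ofReal (T k) := by
          rw [← ENNReal.ofReal_mul hc0, hT, hc]
          congr 1
          field_simp
          rw [hn]; ring
  -- measurability of the terms
  have hterm_meas : ∀ k : Fin d → ℕ, Measurable (fun x : ℝ =>
      ENNReal.ofReal
        ((∏ j, (x / (2 * (d:ℝ))) ^ (2 * k j) / ((k j).factorial : ℝ) ^ 2) * Real.exp (-x))) := by
    intro k
    refine Measurable.ennreal_ofReal (Measurable.mul ?_ (Real.measurable_exp.comp measurable_neg))
    exact Finset.measurable_prod _ fun j _ =>
      ((measurable_id.div_const _).pow_const _).div_const _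
  -- the lintegral identity
  have hlin : (∫⁻ x in Set.Ioi (0:ℝ), ENNReal.ofReal (h x)) =
      ∑' k : Fin d → ℕ, ENNReal.ofReal (T k) := by
    calc (∫⁻ x in Set.Ioi (0:ℝ), ENNReal.ofReal (h x))
        = ∫⁻ x in Set.Ioi (0:ℝ), ∑' k : Fin d → ℕ, ENNReal.ofReal
            ((∏ j, (x / (2 * (d:ℝ))) ^ (2 * k j) / ((k j).factorial : ℝ) ^ 2) * Real.exp (-x)) :=
          lintegral_congr hpt
      _ = ∑' k : Fin d → ℕ, ∫⁻ x in Set.Ioi (0:ℝ), ENNReal.ofReal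
            ((∏ j, (x / (2 * (d:ℝ))) ^ (2 * k j) / ((k j).factorial : ℝ) ^ 2) * Real.exp (-x)) :=
          lintegral_tsum fun k => (hterm_meas k).aemeasurable
      _ = ∑' k : Fin d → ℕ, ENNReal.ofReal (T k) := tsum_congr hterm_int
  -- finiteness
  have hfin : (∑' k : Fin d → ℕ, ENNReal.ofReal (T k)) ≠ ⊤ := by
    rw [← hlin]
    exact (Integrable.lintegral_lt_top hInt).ne
  -- summability of T
  have hsumT : Summable T := by
    have h1 : Summable (fun k : Fin d → ℕ => (T k).toNNReal) :=
      ENNReal.tsum_coe_ne_top_iff_summable.1 hfin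
    refine (NNReal.summable_coe.2 h1).congr fun k => ?_
    rw [Real.coe_toNNReal _ (hTnonneg k)]
  -- identification of terms
  have hRT : ∀ k : Fin d → ℕ,
      (ascPochhammer ℝ (∑ j, k j)).eval 1 * (ascPochhammer ℝ (∑ j, k j)).eval (1 / 2) /
        ((∏ j, ((k j).factorial : ℝ) ^ 2) * (d : ℝ) ^ (2 * ∑ j, k j)) = T k := by
    intro k
    set n : ℕ := ∑ j, k j with hn
    have hTk : T k = ((2 * n).factorial : ℝ) /
        ((2 * (d:ℝ)) ^ (2 * n) * ∏ j, ((k j).factorial : ℝ) ^ 2) := rfl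
    rw [ascPochhammer_eval_one, ascPochhammer_half, hTk]
    have hprod_pos : (0:ℝ) < ∏ j, ((k j).factorial : ℝ) ^ 2 :=
      Finset.prod_pos fun j _ => by positivity
    have h2d : (2 * (d:ℝ)) ^ (2 * n) = 4 ^ n * (d:ℝ) ^ (2 * n) := by
      rw [mul_pow, show ((2:ℝ)) ^ (2 * n) = 4 ^ n by
        rw [pow_mul]; norm_num]
    rw [h2d]
    have hfn : ((n.factorial : ℝ)) ≠ 0 := by positivity
    field_simp
  refine ⟨hInt, ?_, ?_⟩
  · exact hsumT.congr fun k => (hRT k).symm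
  · have hint_eq : (∫ x in Set.Ioi (0 : ℝ), h x) =
        (∫⁻ x in Set.Ioi (0:ℝ), ENNReal.ofReal (h x)).toReal := by
      refine integral_eq_lintegral_of_nonneg_ae (Filter.Eventually.of_forall hnonneg)
        hmeas.aestronglyMeasurable
    rw [hh] at hint_eq
    rw [hint_eq, hlin, ← ENNReal.ofReal_tsum_of_nonneg hTnonneg hsumT,
      ENNReal.toReal_ofReal (tsum_nonneg hTnonneg)]
    exact tsum_congr fun k => (hRT k).symm
end

section
/- For d = 1 and d = 2, the function x ↦ [I₀(x/d)]^d e^{−x} is NOT integrable on the interval (0, ∞); that is, the integral ∫₀^∞ [I₀(x/d)]^d e^{−x} dx diverges. -/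
open MeasureTheory

lemma sixteen_pow_le (k : ℕ) (hk : 1 ≤ k) :
    (16:ℝ)^k ≤ 4 * k * (Nat.centralBinom k : ℝ)^2 := by
  induction k, hk using Nat.le_induction with
  | base =>
    have : Nat.centralBinom 1 = 2 := by decide
    rw [this]; norm_num
  | succ n hn ih =>
    have hc : (0:ℝ) < Nat.centralBinom n := by exact_mod_cast Nat.centralBinom_pos n
    have hn1 : (1:ℝ) ≤ n := by exact_mod_cast hn
    have h1 : ((n:ℝ) + 1) * Nat.centralBinom (n + 1) = 2 * (2 * n + 1) * Nat.centralBinom n := by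
      exact_mod_cast Nat.succ_mul_centralBinom_succ n
    have hsq : ((n:ℝ)+1)^2 * (Nat.centralBinom (n+1):ℝ)^2 = 4*(2*(n:ℝ)+1)^2*(Nat.centralBinom n:ℝ)^2 := by
      rw [← mul_pow, h1]; ring
    have hpos : (0:ℝ) < ((n:ℝ)+1)^2 := by positivity
    rw [← mul_le_mul_iff_of_pos_right hpos]
    have goal' : (16:ℝ)^(n+1) * ((n:ℝ)+1)^2 ≤ 4 * ((n:ℝ)+1) * (4*(2*(n:ℝ)+1)^2*(Nat.centralBinom n:ℝ)^2) := by
      have h2 : (16:ℝ)^(n+1) = 16 * 16^n := by ring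
      nlinarith [ih, hc, mul_pos hc hc, sq_nonneg ((n:ℝ)-1), mul_le_mul_of_nonneg_right ih (le_of_lt hpos)]
    calc (16:ℝ)^(n+1) * ((n:ℝ)+1)^2 ≤ 4 * ((n:ℝ)+1) * (4*(2*(n:ℝ)+1)^2*(Nat.centralBinom n:ℝ)^2) := goal'
      _ = 4 * ((n:ℝ)+1) * (((n:ℝ)+1)^2 * (Nat.centralBinom (n+1):ℝ)^2) := by rw [hsq]
      _ = 4 * (↑(n+1)) * (Nat.centralBinom (n+1):ℝ)^2 * ((n:ℝ)+1)^2 := by push_cast; ring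



lemma four_pow_le (k : ℕ) (hk : 1 ≤ k) :
    (4:ℝ)^k ≤ 2 * Real.sqrt k * Nat.centralBinom k := by
  have h0 : (0:ℝ) ≤ 2 * Real.sqrt k * Nat.centralBinom k := by positivity
  have hsq : ((4:ℝ)^k)^2 ≤ (2 * Real.sqrt k * Nat.centralBinom k)^2 := by
    have h1 : (2 * Real.sqrt k * (Nat.centralBinom k:ℝ))^2 = 4 * k * (Nat.centralBinom k:ℝ)^2 := by
      rw [mul_pow, mul_pow, Real.sq_sqrt (by positivity : (0:ℝ) ≤ (k:ℝ))]; ring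
    have h2 : ((4:ℝ)^k)^2 = 16^k := by
      rw [← pow_mul, mul_comm, pow_mul]; norm_num
    rw [h1, h2]; exact sixteen_pow_le k hk
  calc (4:ℝ)^k = Real.sqrt (((4:ℝ)^k)^2) := by rw [Real.sqrt_sq (by positivity)]
    _ ≤ Real.sqrt ((2 * Real.sqrt k * Nat.centralBinom k)^2) := Real.sqrt_le_sqrt hsq
    _ = 2 * Real.sqrt k * Nat.centralBinom k := Real.sqrt_sq h0

lemma exp_eq_tsum' (x : ℝ) : Real.exp x = ∑' n : ℕ, x ^ n / n.factorial := by
  rw [Real.exp_eq_exp_ℝ, NormedSpace.exp_eq_tsum_div]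

lemma pow_self_le (n : ℕ) : ((n:ℝ))^n ≤ n.factorial * Real.exp 1 ^ n := by
  have h1 : ((n:ℝ))^n / n.factorial ≤ Real.exp n := by
    rw [exp_eq_tsum']
    exact Summable.le_tsum (Real.summable_pow_div_factorial _) n (fun j _ => by positivity)
  have h2 : Real.exp n = Real.exp 1 ^ n := by
    rw [← Real.exp_nat_mul]; norm_num
  have hf : (0:ℝ) < n.factorial := by exact_mod_cast Nat.factorial_pos n
  rw [div_le_iff₀ hf] at h1
  rw [h2] at h1; linarith

lemma tail_term_le {x : ℝ} (hx : 0 ≤ x) {m : ℕ} (hm : 2 * x ≤ m) (hm1 : 1 ≤ m) :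
    x ^ (2*m) / (2*m).factorial ≤ (1/2:ℝ) ^ m := by
  have hn : (0:ℝ) < 2*(m:ℝ) := by
    have : (1:ℝ) ≤ m := by exact_mod_cast hm1
    linarith
  have hf : (0:ℝ) < ((2*m).factorial : ℝ) := by exact_mod_cast Nat.factorial_pos _
  have key : ((2*m:ℕ):ℝ)^(2*m) ≤ (2*m).factorial * Real.exp 1 ^ (2*m) := pow_self_le (2*m)
  have key' : (2*(m:ℝ))^(2*m) ≤ (2*m).factorial * Real.exp 1 ^ (2*m) := by push_cast at key; exact key
  have h1 : x ^ (2*m) / (2*m).factorial ≤ (x * Real.exp 1 / (2*(m:ℝ))) ^ (2*m) := by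
    rw [div_pow, div_le_div_iff₀ hf (by positivity)]
    calc x^(2*m) * (2*(m:ℝ))^(2*m) ≤ x^(2*m) * ((2*m).factorial * Real.exp 1 ^ (2*m)) :=
          mul_le_mul_of_nonneg_left key' (by positivity)
      _ = (x * Real.exp 1)^(2*m) * (2*m).factorial := by rw [mul_pow]; ring
  have hbase : x * Real.exp 1 / (2*(m:ℝ)) ≤ Real.exp 1 / 4 := by
    rw [div_le_div_iff₀ hn (by norm_num)]
    have he : (0:ℝ) < Real.exp 1 := Real.exp_pos 1
    nlinarith [hm, he]
  have h2 : (x * Real.exp 1 / (2*(m:ℝ))) ^ (2*m) ≤ (Real.exp 1 / 4) ^ (2*m) :=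
    pow_le_pow_left₀ (by positivity) hbase _
  have h3 : (Real.exp 1 / 4) ^ (2*m) ≤ (1/2:ℝ) ^ m := by
    rw [pow_mul]
    apply pow_le_pow_left₀ (by positivity) _ m
    have he : Real.exp 1 < 2.7182818286 := Real.exp_one_lt_d9
    have he0 : (0:ℝ) < Real.exp 1 := Real.exp_pos 1
    nlinarith
  linarith


lemma summable_even (x : ℝ) : Summable (fun k : ℕ => x ^ (2*k) / (2*k).factorial) :=
  (Real.summable_pow_div_factorial x).comp_injective (fun a b h => by omega)

lemma summable_odd (x : ℝ) : Summable (fun k : ℕ => x ^ (2*k+1) / (2*k+1).factorial) :=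
  (Real.summable_pow_div_factorial x).comp_injective (fun a b h => by omega)

lemma tsum_even_eq (x : ℝ) :
    2 * ∑' k : ℕ, x ^ (2*k) / (2*k).factorial = Real.exp x + Real.exp (-x) := by
  have h1 : (∑' k : ℕ, x ^ (2*k) / (2*k).factorial) + (∑' k : ℕ, x ^ (2*k+1) / (2*k+1).factorial)
      = Real.exp x := by
    rw [exp_eq_tsum' x]
    exact tsum_even_add_odd (f := fun n : ℕ => x ^ n / n.factorial) (summable_even x) (summable_odd x)
  have h2 : (∑' k : ℕ, x ^ (2*k) / (2*k).factorial) - (∑' k : ℕ, x ^ (2*k+1) / (2*k+1).factorial)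
      = Real.exp (-x) := by
    rw [exp_eq_tsum' (-x)]
    have he : ∀ k : ℕ, (-x) ^ (2*k) / (2*k).factorial = x ^ (2*k) / (2*k).factorial := by
      intro k; rw [pow_mul, pow_mul, neg_pow, neg_pow]; norm_num
    have ho : ∀ k : ℕ, (-x) ^ (2*k+1) / (2*k+1).factorial = -(x ^ (2*k+1) / (2*k+1).factorial) := by
      intro k
      rw [Odd.neg_pow ⟨k, by ring⟩, neg_div]
    rw [← tsum_even_add_odd (f := fun n : ℕ => (-x) ^ n / n.factorial) (summable_even (-x)) (summable_odd (-x))]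
    rw [tsum_congr he, tsum_congr ho, tsum_neg]
    ring
  linarith



lemma tail_le {x : ℝ} (hx : 0 ≤ x) {N : ℕ} (hN : 2 * x ≤ N) (hN1 : 1 ≤ N) :
    ∑' k : ℕ, x ^ (2*(k + (N+1))) / (2*(k + (N+1))).factorial ≤ 2 := by
  have hs : Summable (fun k : ℕ => x ^ (2*(k + (N+1))) / (2*(k + (N+1))).factorial : ℕ → ℝ) :=
    (Real.summable_pow_div_factorial x).comp_injective (fun a b h => by omega)
  have hg : Summable (fun k : ℕ => (1/2:ℝ) ^ (k + (N+1))) := by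
    apply Summable.comp_injective (summable_geometric_of_lt_one (by norm_num) (by norm_num))
      (fun a b h => by omega)
  calc ∑' k : ℕ, x ^ (2*(k + (N+1))) / (2*(k + (N+1))).factorial
      ≤ ∑' k : ℕ, (1/2:ℝ) ^ (k + (N+1)) := by
        apply Summable.tsum_le_tsum _ hs hg
        intro k
        exact tail_term_le hx (by push_cast; linarith) (by omega)
    _ ≤ ∑' k : ℕ, (1/2:ℝ) ^ k := by
        apply Summable.tsum_le_tsum _ hg (summable_geometric_of_lt_one (by norm_num) (by norm_num))
        intro k
        exact pow_le_pow_of_le_one (by norm_num) (by norm_num) (by omega)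
    _ = 2 := by
        rw [tsum_geometric_of_lt_one (by norm_num) (by norm_num)]; norm_num






lemma summable_besselI0 (x : ℝ) :
    Summable (fun k : ℕ => (x/2) ^ (2*k) / ((k.factorial:ℝ))^2) := by
  apply Summable.of_nonneg_of_le (fun k => ?_) (fun k => ?_)
    (Real.summable_pow_div_factorial ((x/2)^2))
  · rw [pow_mul]; positivity
  · rw [pow_mul]
    have h1 : (1:ℝ) ≤ k.factorial := by exact_mod_cast Nat.one_le_iff_ne_zero.2 (Nat.factorial_ne_zero k)
    have h2 : (k.factorial:ℝ) ≤ ((k.factorial:ℝ))^2 := by nlinarith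
    gcongr

lemma besselI0_lower {x : ℝ} (hx : 3 ≤ x) :
    Real.exp x / (8 * Real.sqrt (3 * x)) ≤ besselI0 x := by
  have hx0 : (0:ℝ) < x := by linarith
  set N := ⌈2 * x⌉₊ with hNdef
  have hN : 2 * x ≤ N := Nat.le_ceil _
  have hN1 : 1 ≤ N := by
    have : (1:ℝ) ≤ N := by linarith
    exact_mod_cast Nat.one_le_iff_ne_zero.2 (by intro h; rw [h] at this; norm_num at this)
  have hN3 : (N:ℝ) ≤ 3 * x := by
    have := Nat.ceil_lt_add_one (by linarith : (0:ℝ) ≤ 2*x)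
    linarith
  have hNpos : (0:ℝ) < N := by linarith
  have hsqrtN : (0:ℝ) < Real.sqrt N := Real.sqrt_pos.2 hNpos
  -- step 1: besselI0 x ≥ partial sum
  have step1 : ∑ k ∈ Finset.Icc 1 N, (x/2) ^ (2*k) / ((k.factorial:ℝ))^2 ≤ besselI0 x := by
    apply Summable.sum_le_tsum _ (fun k _ => by rw [pow_mul]; positivity) (summable_besselI0 x)
  -- step 2: termwise lower bound
  have step2 : ∀ k ∈ Finset.Icc 1 N,
      x ^ (2*k) / (2*Real.sqrt N * (2*k).factorial) ≤ (x/2) ^ (2*k) / ((k.factorial:ℝ))^2 := by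
    intro k hk
    obtain ⟨hk1, hkN⟩ := Finset.mem_Icc.1 hk
    have hfact : (Nat.centralBinom k : ℝ) * ((k.factorial:ℝ))^2 = ((2*k).factorial : ℝ) := by
      have h := Nat.choose_mul_factorial_mul_factorial (Nat.le_mul_of_pos_left k (by norm_num) : k ≤ 2*k)
      have h2 : Nat.centralBinom k * k.factorial * k.factorial = (2*k).factorial := by
        rw [Nat.centralBinom]
        convert h using 3
        omega
      push_cast [← h2]; ring
    have hlhs : (x/2) ^ (2*k) / ((k.factorial:ℝ))^2 = x^(2*k) / ((4:ℝ)^k * ((k.factorial:ℝ))^2) := by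
      have h4 : (2:ℝ)^(2*k) = 4^k := by rw [pow_mul]; norm_num
      rw [div_pow, div_div, h4]
    rw [hlhs]
    have hden : 2*Real.sqrt N * ((2*k).factorial:ℝ) ≥ (4:ℝ)^k * ((k.factorial:ℝ))^2 := by
      have h4 : (4:ℝ)^k ≤ 2 * Real.sqrt k * Nat.centralBinom k := four_pow_le k hk1
      have hsk : Real.sqrt k ≤ Real.sqrt N := Real.sqrt_le_sqrt (by exact_mod_cast hkN)
      have hcb : (0:ℝ) < Nat.centralBinom k := by exact_mod_cast Nat.centralBinom_pos k
      have hf2 : (0:ℝ) < ((k.factorial:ℝ))^2 := by positivity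
      calc (4:ℝ)^k * ((k.factorial:ℝ))^2 ≤ (2 * Real.sqrt k * Nat.centralBinom k) * ((k.factorial:ℝ))^2 :=
            mul_le_mul_of_nonneg_right h4 (le_of_lt hf2)
        _ = 2 * Real.sqrt k * ((Nat.centralBinom k:ℝ) * ((k.factorial:ℝ))^2) := by ring
        _ = 2 * Real.sqrt k * ((2*k).factorial:ℝ) := by rw [hfact]
        _ ≤ 2 * Real.sqrt N * ((2*k).factorial:ℝ) := by
            have : (0:ℝ) ≤ ((2*k).factorial:ℝ) := by positivity
            have h0 : (0:ℝ) ≤ Real.sqrt k := Real.sqrt_nonneg _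
            nlinarith
    apply div_le_div_of_nonneg_left _ _ hden
    · rw [pow_mul]; positivity
    · positivity
  have step3 : ∑ k ∈ Finset.Icc 1 N, x ^ (2*k) / (2*Real.sqrt N * (2*k).factorial)
      = (∑ k ∈ Finset.Icc 1 N, x ^ (2*k) / ((2*k).factorial : ℝ)) / (2*Real.sqrt N) := by
    rw [Finset.sum_div]
    apply Finset.sum_congr rfl
    intro k _
    rw [div_div]
    ring_nf
  have hg := summable_even x
  have h5 : ∑ k ∈ Finset.range (N+1), x^(2*k)/((2*k).factorial:ℝ)
      + ∑' k : ℕ, x ^ (2*(k + (N+1))) / (2*(k + (N+1))).factorial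
      = ∑' k : ℕ, x^(2*k)/((2*k).factorial:ℝ) := by
    exact Summable.sum_add_tsum_nat_add (f := fun k : ℕ => x^(2*k)/((2*k).factorial:ℝ)) (N+1) hg
  have h6 : Real.exp x / 2 ≤ ∑' k : ℕ, x^(2*k)/((2*k).factorial:ℝ) := by
    have h := tsum_even_eq x
    have hne : 0 < Real.exp (-x) := Real.exp_pos _
    linarith
  have htail := tail_le (le_of_lt hx0) hN hN1
  have hrange : Finset.range (N+1) = insert 0 (Finset.Icc 1 N) := by
    ext a; simp only [Finset.mem_range, Finset.mem_insert, Finset.mem_Icc]; omega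
  have h7 : ∑ k ∈ Finset.range (N+1), x^(2*k)/((2*k).factorial:ℝ)
      = 1 + ∑ k ∈ Finset.Icc 1 N, x^(2*k)/((2*k).factorial:ℝ) := by
    rw [hrange, Finset.sum_insert (by simp)]
    norm_num
  have hexp12 : (12:ℝ) ≤ Real.exp x := by
    have h1 : (2.7182818283:ℝ) < Real.exp 1 := Real.exp_one_gt_d9
    have h3 : Real.exp 3 ≤ Real.exp x := Real.exp_le_exp.2 hx
    have h4 : Real.exp 3 = Real.exp 1 ^ 3 := by
      rw [← Real.exp_nat_mul]; norm_num
    have h5' : (2.7:ℝ)^3 ≤ Real.exp 1 ^ 3 := pow_le_pow_left₀ (by norm_num) (by linarith) 3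
    have h6' : (2.7:ℝ)^3 = 19.683 := by norm_num
    linarith
  have h8 : Real.exp x / 4 ≤ ∑ k ∈ Finset.Icc 1 N, x^(2*k)/((2*k).factorial:ℝ) := by
    linarith
  have main : Real.exp x / (8 * Real.sqrt N) ≤ besselI0 x := by
    have hstep2 := Finset.sum_le_sum step2
    calc Real.exp x / (8 * Real.sqrt N) = (Real.exp x / 4) / (2 * Real.sqrt N) := by
          rw [div_div]; ring_nf
      _ ≤ (∑ k ∈ Finset.Icc 1 N, x^(2*k)/((2*k).factorial:ℝ)) / (2*Real.sqrt N) := by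
          gcongr
      _ = ∑ k ∈ Finset.Icc 1 N, x ^ (2*k) / (2*Real.sqrt N * (2*k).factorial) := step3.symm
      _ ≤ ∑ k ∈ Finset.Icc 1 N, (x/2) ^ (2*k) / ((k.factorial:ℝ))^2 := hstep2
      _ ≤ besselI0 x := step1
  have hsx : Real.sqrt N ≤ Real.sqrt (3*x) := Real.sqrt_le_sqrt hN3
  calc Real.exp x / (8 * Real.sqrt (3*x)) ≤ Real.exp x / (8 * Real.sqrt N) := by
        gcongr
      _ ≤ besselI0 x := main




lemma key_contra (c : ℝ) (F : ℝ → ℝ) (hF : IntegrableOn F (Set.Ioi 0))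
    (hbound : ∀ x ∈ Set.Ioi (8:ℝ), x⁻¹ ≤ c * F x) : False := by
  have h1 : IntegrableOn (fun x => c * F x) (Set.Ioi 8) :=
    (hF.mono (Set.Ioi_subset_Ioi (by norm_num)) le_rfl).const_mul c
  have h2 : IntegrableOn (fun x : ℝ => x⁻¹) (Set.Ioi 8) := by
    apply h1.mono' measurable_inv.aestronglyMeasurable
    filter_upwards [ae_restrict_mem measurableSet_Ioi] with x hx
    have hx0 : (0:ℝ) < x := lt_trans (by norm_num) hx
    rw [Real.norm_eq_abs, abs_of_nonneg (inv_nonneg.2 hx0.le)]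
    exact hbound x hx
  exact not_IntegrableOn_Ioi_inv h2

lemma sqrt_le_3x {x : ℝ} (hx : 8 < x) : Real.sqrt (3 * x) ≤ 3 * x := by
  have h1 : (1:ℝ) ≤ 3 * x := by linarith
  calc Real.sqrt (3*x) ≤ Real.sqrt ((3*x)^2) := Real.sqrt_le_sqrt (by nlinarith)
    _ = 3*x := Real.sqrt_sq (by linarith)

/-- For `d = 1` and `d = 2`, the function `x ↦ [I₀(x/d)]^d e^{-x}` is not integrable
on `(0, ∞)`. -/
theorem not_integrableOn_besselI0_pow_mul_exp :
    ¬ IntegrableOn (fun x : ℝ => (besselI0 (x / 1)) ^ 1 * Real.exp (-x)) (Set.Ioi 0) ∧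
    ¬ IntegrableOn (fun x : ℝ => (besselI0 (x / 2)) ^ 2 * Real.exp (-x)) (Set.Ioi 0) := by
  constructor
  · intro h
    apply key_contra 24 _ h
    intro x hx
    simp only [Set.mem_Ioi] at hx
    have hx0 : (0:ℝ) < x := by linarith
    have hI := besselI0_lower (by linarith : (3:ℝ) ≤ x / 1)
    rw [div_one] at hI ⊢
    have hs0 : (0:ℝ) < Real.sqrt (3 * x) := Real.sqrt_pos.2 (by linarith)
    have hs : Real.sqrt (3 * x) ≤ 3 * x := sqrt_le_3x hx
    have he : 0 < Real.exp (-x) := Real.exp_pos _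
    have hem : Real.exp x * Real.exp (-x) = 1 := by
      rw [← Real.exp_add]; simp
    have hb : Real.exp x / (8 * Real.sqrt (3*x)) * Real.exp (-x) ≤ besselI0 x * Real.exp (-x) :=
      mul_le_mul_of_nonneg_right hI he.le
    have hval : Real.exp x / (8 * Real.sqrt (3*x)) * Real.exp (-x) = 1 / (8 * Real.sqrt (3*x)) := by
      field_simp
      linarith [hem]
    rw [hval] at hb
    have h24 : x⁻¹ ≤ 24 * (1 / (8 * Real.sqrt (3*x))) := by
      rw [inv_le_iff_one_le_mul₀ hx0]
      have heq : 24 * (1 / (8 * Real.sqrt (3*x))) * x = (3*x) / Real.sqrt (3*x) := by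
        field_simp; ring
      rw [heq, le_div_iff₀ hs0]
      linarith
    calc x⁻¹ ≤ 24 * (1 / (8 * Real.sqrt (3*x))) := h24
      _ ≤ 24 * (besselI0 x ^ 1 * Real.exp (-x)) := by
          rw [pow_one]; linarith
  · intro h
    apply key_contra 96 _ h
    intro x hx
    simp only [Set.mem_Ioi] at hx
    have hx0 : (0:ℝ) < x := by linarith
    have hI := besselI0_lower (by linarith : (3:ℝ) ≤ x / 2)
    have hs0 : (0:ℝ) < Real.sqrt (3 * (x/2)) := Real.sqrt_pos.2 (by linarith)
    have hsq : Real.sqrt (3 * (x/2)) ^ 2 = 3 * (x/2) := Real.sq_sqrt (by linarith)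
    have hIsq : (Real.exp (x/2) / (8 * Real.sqrt (3*(x/2))))^2 ≤ besselI0 (x/2) ^ 2 :=
      pow_le_pow_left₀ (by positivity) hI 2
    have hexpsq : Real.exp (x/2) ^ 2 = Real.exp x := by
      rw [sq, ← Real.exp_add]; ring_nf
    have hval : (Real.exp (x/2) / (8 * Real.sqrt (3*(x/2))))^2 = Real.exp x / (96 * x) := by
      rw [div_pow, mul_pow, hsq, hexpsq]
      norm_num
      ring_nf
    rw [hval] at hIsq
    have he : 0 < Real.exp (-x) := Real.exp_pos _
    have hem : Real.exp x * Real.exp (-x) = 1 := by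
      rw [← Real.exp_add]; simp
    have hb : Real.exp x / (96*x) * Real.exp (-x) ≤ besselI0 (x/2) ^ 2 * Real.exp (-x) :=
      mul_le_mul_of_nonneg_right hIsq he.le
    have hval2 : Real.exp x / (96*x) * Real.exp (-x) = 1 / (96 * x) := by
      field_simp
      linarith [hem]
    rw [hval2] at hb
    calc x⁻¹ = 96 * (1 / (96 * x)) := by field_simp
      _ ≤ 96 * (besselI0 (x/2) ^ 2 * Real.exp (-x)) := by linarith
end

section
/- For every integer d ≥ 3, the d-indexed family (k₁, …, k_d) ↦ (1)_{k₁+⋯+k_d} (1/2)_{k₁+⋯+k_d} / ((k₁)!² ⋯ (k_d)!² · d^{2(k₁+⋯+k_d)}) of nonnegative real numbers is summable; that is, the Lauricella series F_C^{(d)}(1, 1/2; 1, …, 1; 1/d², …, 1/d²) converges. -/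
open Finset



section LauricellaAux

open Finset

lemma cb_sq (n : ℕ) : (Nat.centralBinom n : ℝ)^2 * (3*n+1) ≤ 16^n := by
  induction n with
  | zero => simp [Nat.centralBinom]
  | succ n ih =>
    set a : ℝ := (Nat.centralBinom n : ℝ) with ha
    set b : ℝ := (Nat.centralBinom (n+1) : ℝ) with hb'
    have key : ((n:ℝ)+1) * b = 2*(2*(n:ℝ)+1) * a := by
      have := congrArg (fun m : ℕ => (m:ℝ)) (Nat.succ_mul_centralBinom_succ n)
      push_cast at this
      linarith [this]
    have h2 : b^2*((n:ℝ)+1)^2 = 4*(2*(n:ℝ)+1)^2 * a^2 := by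
      have := congrArg (fun x : ℝ => x^2) key
      nlinarith [this]
    have hb : (0:ℝ) ≤ a^2 := sq_nonneg _
    have hn : (0:ℝ) ≤ (n:ℝ) := n.cast_nonneg
    have hpos : (0:ℝ) < ((n:ℝ)+1)^2 := by positivity
    have hpoly : 4*(2*(n:ℝ)+1)^2*(3*(n:ℝ)+4) ≤ 16*((n:ℝ)+1)^2*(3*(n:ℝ)+1) := by nlinarith [hn]
    have step : b^2 * (3*((n:ℝ)+1)+1) * ((n:ℝ)+1)^2 ≤ 16^(n+1) * ((n:ℝ)+1)^2 := by
      have c1 : b^2 * (3*((n:ℝ)+1)+1) * ((n:ℝ)+1)^2 = a^2 * (4*(2*(n:ℝ)+1)^2*(3*(n:ℝ)+4)) := by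
        nlinarith [h2]
      have c2 : a^2 * (4*(2*(n:ℝ)+1)^2*(3*(n:ℝ)+4)) ≤ a^2 * (16*((n:ℝ)+1)^2*(3*(n:ℝ)+1)) :=
        mul_le_mul_of_nonneg_left hpoly hb
      have c3 : a^2 * (16*((n:ℝ)+1)^2*(3*(n:ℝ)+1)) = (a^2 * (3*(n:ℝ)+1)) * (16*((n:ℝ)+1)^2) := by ring
      have c4 : (a^2 * (3*(n:ℝ)+1)) * (16*((n:ℝ)+1)^2) ≤ 16^n * (16*((n:ℝ)+1)^2) :=
        mul_le_mul_of_nonneg_right ih (by positivity)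
      have c5 : (16:ℝ)^n * (16*((n:ℝ)+1)^2) = 16^(n+1) * ((n:ℝ)+1)^2 := by ring
      linarith [c1.le, c2, c3.le, c4, c5.le, c1.ge, c3.ge, c5.ge]
    have goal' : b^2 * (3*((n:ℝ)+1)+1) ≤ 16^(n+1) := le_of_mul_le_mul_right (by linarith [step]) hpos
    push_cast
    linarith [goal']

lemma cb_le_four_pow (n : ℕ) : (Nat.centralBinom n : ℝ) ≤ 4^n := by
  have h := cb_sq n
  have hn : (0:ℝ) ≤ (n:ℝ) := n.cast_nonneg
  have h1 : (Nat.centralBinom n : ℝ)^2 ≤ (4^n)^2 := by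
    have h16 : ((4:ℝ)^n)^2 = 16^n := by rw [← pow_mul, pow_mul']; norm_num
    nlinarith [sq_nonneg (Nat.centralBinom n : ℝ)]
  exact (pow_le_pow_iff_left₀ (by positivity) (by positivity) (by norm_num)).mp h1

lemma cb_div_le (n : ℕ) (hn : 1 ≤ n) : (Nat.centralBinom n : ℝ)/4^n ≤ 1/Real.sqrt n := by
  have hn' : (0:ℝ) < (n:ℝ) := by exact_mod_cast hn
  have h4 : (0:ℝ) < 4^n := by positivity
  have hs : (0:ℝ) < Real.sqrt n := Real.sqrt_pos.mpr hn'
  rw [div_le_div_iff₀ h4 hs]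
  -- CB * sqrt n ≤ 1 * 4^n  ⟸  (CB * sqrt n)^2 ≤ (4^n)^2
  have hsq : ((Nat.centralBinom n : ℝ) * Real.sqrt n)^2 ≤ (4^n)^2 := by
    have h := cb_sq n
    have hss : Real.sqrt (n:ℝ)^2 = (n:ℝ) := Real.sq_sqrt hn'.le
    have h16 : ((4:ℝ)^n)^2 = 16^n := by rw [← pow_mul, pow_mul']; norm_num
    have hnn : (n:ℝ) ≤ 3*(n:ℝ)+1 := by linarith
    calc ((Nat.centralBinom n : ℝ) * Real.sqrt n)^2
        = (Nat.centralBinom n : ℝ)^2 * (n:ℝ) := by rw [mul_pow, hss]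
      _ ≤ (Nat.centralBinom n : ℝ)^2 * (3*(n:ℝ)+1) :=
          mul_le_mul_of_nonneg_left hnn (sq_nonneg _)
      _ ≤ 16^n := h
      _ = (4^n)^2 := h16.symm
  have := (pow_le_pow_iff_left₀ (by positivity) (by positivity : (0:ℝ) ≤ 4^n) (two_ne_zero)).mp hsq
  linarith [this]

section Stir
open Stirling Real

lemma factorial_eq_stirling (n : ℕ) (hn : 1 ≤ n) :
    (n.factorial : ℝ) = stirlingSeq n * (Real.sqrt (2*n) * ((n:ℝ) / Real.exp 1)^n) := by
  have hn' : (0:ℝ) < (n:ℝ) := by exact_mod_cast hn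
  have hd : (0:ℝ) < Real.sqrt (2*n) * ((n:ℝ) / Real.exp 1)^n := by positivity
  rw [stirlingSeq, div_mul_cancel₀]
  exact hd.ne'

lemma stirling_le (n : ℕ) (hn : 1 ≤ n) : stirlingSeq n ≤ Real.exp 1 / Real.sqrt 2 := by
  obtain ⟨m, rfl⟩ := Nat.exists_eq_add_of_le hn
  have := stirlingSeq'_antitone (Nat.zero_le m)
  rw [add_comm]; simpa [stirlingSeq_one] using this

lemma stirling_ge (n : ℕ) (hn : 1 ≤ n) : Real.sqrt π ≤ stirlingSeq n := by
  obtain ⟨m, rfl⟩ := Nat.exists_eq_add_of_le hn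
  have ht : Filter.Tendsto (stirlingSeq ∘ Nat.succ) Filter.atTop (nhds (Real.sqrt π)) :=
    tendsto_stirlingSeq_sqrt_pi.comp (Filter.tendsto_add_atTop_nat 1)
  rw [add_comm]; simpa using stirlingSeq'_antitone.le_of_tendsto ht m

lemma factorial_upper (n : ℕ) (hn : 1 ≤ n) :
    (n.factorial : ℝ) ≤ Real.exp 1 * Real.sqrt n * ((n:ℝ) / Real.exp 1)^n := by
  have hn' : (0:ℝ) < (n:ℝ) := by exact_mod_cast hn
  rw [factorial_eq_stirling n hn]
  have h2 : Real.sqrt (2*(n:ℝ)) = Real.sqrt 2 * Real.sqrt n := Real.sqrt_mul (by norm_num) _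
  have hpow : (0:ℝ) ≤ ((n:ℝ) / Real.exp 1)^n := by positivity
  calc stirlingSeq n * (Real.sqrt (2*n) * ((n:ℝ) / Real.exp 1)^n)
      ≤ (Real.exp 1 / Real.sqrt 2) * (Real.sqrt (2*n) * ((n:ℝ) / Real.exp 1)^n) := by
        apply mul_le_mul_of_nonneg_right (stirling_le n hn) (by positivity)
    _ = Real.exp 1 * Real.sqrt n * ((n:ℝ) / Real.exp 1)^n := by
        rw [h2]
        have : Real.sqrt 2 ≠ 0 := by positivity
        field_simp

lemma factorial_lower (n : ℕ) (hn : 1 ≤ n) :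
    Real.sqrt n * ((n:ℝ) / Real.exp 1)^n ≤ (n.factorial : ℝ) := by
  have hn' : (0:ℝ) < (n:ℝ) := by exact_mod_cast hn
  rw [factorial_eq_stirling n hn]
  have h2 : Real.sqrt (2*(n:ℝ)) = Real.sqrt 2 * Real.sqrt n := Real.sqrt_mul (by norm_num) _
  have h1 : (1:ℝ) ≤ Real.sqrt π * Real.sqrt 2 := by
    have : (1:ℝ) ≤ π := by linarith [Real.pi_gt_three]
    nlinarith [Real.sqrt_le_sqrt this, Real.sq_sqrt (le_of_lt Real.pi_pos),
      Real.sq_sqrt (by norm_num : (0:ℝ) ≤ 2), Real.sqrt_nonneg π, Real.sqrt_nonneg 2,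
      Real.one_le_sqrt.mpr this]
  have hge := stirling_ge n hn
  have hpos : (0:ℝ) ≤ Real.sqrt n * ((n:ℝ)/Real.exp 1)^n := by positivity
  calc Real.sqrt n * ((n:ℝ) / Real.exp 1)^n
      = 1 * (Real.sqrt n * ((n:ℝ) / Real.exp 1)^n) := by ring
    _ ≤ (Real.sqrt π * Real.sqrt 2) * (Real.sqrt n * ((n:ℝ) / Real.exp 1)^n) :=
        mul_le_mul_of_nonneg_right h1 hpos
    _ ≤ stirlingSeq n * (Real.sqrt (2*n) * ((n:ℝ) / Real.exp 1)^n) := by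
        rw [h2]
        have := mul_le_mul_of_nonneg_right hge (mul_nonneg (Real.sqrt_nonneg 2) hpos)
        calc Real.sqrt π * Real.sqrt 2 * (Real.sqrt n * ((n:ℝ)/Real.exp 1)^n)
            = Real.sqrt π * (Real.sqrt 2 * (Real.sqrt n * ((n:ℝ)/Real.exp 1)^n)) := by ring
          _ ≤ stirlingSeq n * (Real.sqrt 2 * (Real.sqrt n * ((n:ℝ)/Real.exp 1)^n)) := this
          _ = stirlingSeq n * (Real.sqrt 2 * Real.sqrt n * ((n:ℝ)/Real.exp 1)^n) := by ring

end Stir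

noncomputable def fconv : ℝ → ℝ := fun x => (x + 1/2) * Real.log x

lemma deriv_fconv {x : ℝ} (hx : 0 < x) :
    deriv fconv x = Real.log x + (x + 1/2) * x⁻¹ := by
  have h1 : HasDerivAt (fun x : ℝ => x + 1/2) 1 x := (hasDerivAt_id x).add_const _
  have h2 : HasDerivAt Real.log x⁻¹ x := Real.hasDerivAt_log hx.ne'
  have h := h1.mul h2
  have := h.deriv
  unfold fconv
  rw [one_mul] at this; exact this

lemma convexOn_fconv : ConvexOn ℝ (Set.Ici (1:ℝ)) fconv := by
  apply MonotoneOn.convexOn_of_deriv (convex_Ici 1)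
  · apply ContinuousOn.mul (by fun_prop)
    apply Real.continuousOn_log.mono
    intro x hx
    simp only [Set.mem_Ici] at hx
    simp only [Set.mem_compl_iff, Set.mem_singleton_iff]
    intro h; rw [h] at hx; linarith
  · rw [interior_Ici]
    intro x hx
    simp only [Set.mem_Ioi] at hx
    exact (((differentiableAt_id).add_const _).mul
      (Real.differentiableAt_log (by linarith))).differentiableWithinAt
  · rw [interior_Ici]
    intro x hx y hy hxy
    simp only [Set.mem_Ioi] at hx hy
    have hx0 : (0:ℝ) < x := by linarith
    have hy0 : (0:ℝ) < y := by linarith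
    rw [deriv_fconv hx0, deriv_fconv hy0]
    have hlog : Real.log x - Real.log y ≤ x/y - 1 := by
      have := Real.log_le_sub_one_of_pos (div_pos hx0 hy0)
      rwa [Real.log_div hx0.ne' hy0.ne'] at this
    have e1 : (x + 1/2) * x⁻¹ = 1 + 1/(2*x) := by field_simp
    have e2 : (y + 1/2) * y⁻¹ = 1 + 1/(2*y) := by field_simp
    have key : 1/(2*x) - 1/(2*y) ≤ 1 - x/y := by
      have hid : 1 - x/y - (1/(2*x) - 1/(2*y)) = (y - x)*(2*x - 1)/(2*x*y) := by
        field_simp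
      have hnn : (0:ℝ) ≤ (y - x)*(2*x - 1)/(2*x*y) := by
        apply div_nonneg (mul_nonneg (by linarith) (by linarith)) (by positivity)
      linarith [hid ▸ hnn]
    rw [e1, e2]
    linarith

lemma jensen_prod {d : ℕ} (hd : 0 < d) (k : Fin d → ℕ) (hk : ∀ j, 1 ≤ k j) :
    ((∑ j, k j : ℕ) / (d:ℝ)) ^ (((∑ j, k j : ℕ) : ℝ) + d/2)
      ≤ ∏ j, (k j : ℝ) ^ ((k j : ℝ) + 1/2) := by
  set n : ℕ := ∑ j, k j with hn
  have hnd : (d:ℕ) ≤ n := by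
    calc d = ∑ _j : Fin d, 1 := by simp
      _ ≤ n := Finset.sum_le_sum (fun j _ => hk j)
  have hd' : (0:ℝ) < d := by exact_mod_cast hd
  have hnd' : (1:ℝ) ≤ (n:ℝ)/d := by
    rw [le_div_iff₀ hd']
    simp only [one_mul]
    exact_mod_cast hnd
  have hmean : (0:ℝ) < (n:ℝ)/d := by linarith
  -- Jensen
  have hjen : fconv (∑ j, (1/(d:ℝ)) • ((k j : ℝ))) ≤ ∑ j, (1/(d:ℝ)) • fconv (k j) := by
    apply convexOn_fconv.map_sum_le
    · intro i _; positivity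
    · rw [Finset.sum_const, Finset.card_univ, Fintype.card_fin]
      rw [nsmul_eq_mul, mul_one_div_cancel hd'.ne']
    · intro i _
      simp only [Set.mem_Ici]
      exact_mod_cast hk i
  have hsum : (∑ j, (1/(d:ℝ)) • ((k j : ℝ))) = (n:ℝ)/d := by
    simp only [smul_eq_mul, ← Finset.mul_sum]
    rw [hn]
    push_cast
    ring
  rw [hsum] at hjen
  -- multiply by d
  have hjen2 : (d:ℝ) * fconv ((n:ℝ)/d) ≤ ∑ j, fconv (k j) := by
    have := mul_le_mul_of_nonneg_left hjen hd'.le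
    calc (d:ℝ) * fconv ((n:ℝ)/d) ≤ (d:ℝ) * ∑ j, (1/(d:ℝ)) • fconv (k j) := this
      _ = ∑ j, fconv (k j) := by
          simp only [smul_eq_mul, ← Finset.mul_sum]
          field_simp
  have hdf : (d:ℝ) * fconv ((n:ℝ)/d) = ((n:ℝ) + (d:ℝ)/2) * Real.log ((n:ℝ)/d) := by
    rw [fconv]
    field_simp
  -- convert to rpow / exp
  rw [Real.rpow_def_of_pos hmean]
  have hprod : ∏ j, (k j : ℝ) ^ ((k j : ℝ) + 1/2)
      = Real.exp (∑ j, fconv (k j)) := by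
    rw [Real.exp_sum]
    apply Finset.prod_congr rfl
    intro j _
    have hkj : (0:ℝ) < (k j : ℝ) := by exact_mod_cast hk j
    rw [Real.rpow_def_of_pos hkj, fconv]
    ring_nf
  rw [hprod]
  apply Real.exp_le_exp.mpr
  calc Real.log ((n:ℝ)/d) * ((n:ℝ) + (d:ℝ)/2) = (d:ℝ) * fconv ((n:ℝ)/d) := by rw [hdf]; ring
    _ ≤ ∑ j, fconv (k j) := hjen2

-- placeholders from earlier parts

lemma multinomial_full_le {d : ℕ} (hd : 0 < d) (k : Fin d → ℕ) (hk : ∀ j, 1 ≤ k j) :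
    (Nat.multinomial univ k : ℝ) ≤
      Real.exp 1 * (d:ℝ)^((d:ℝ)/2) * (d:ℝ)^(∑ j, k j) * ((∑ j, k j : ℕ):ℝ)^((1-(d:ℝ))/2) := by
  set n : ℕ := ∑ j, k j with hn
  have hnd : (d:ℕ) ≤ n := by
    calc d = ∑ _j : Fin d, 1 := by simp
      _ ≤ n := Finset.sum_le_sum (fun j _ => hk j)
  have hn1 : 1 ≤ n := le_trans hd hnd
  have hN : (0:ℝ) < (n:ℝ) := by exact_mod_cast hn1
  have hD : (0:ℝ) < (d:ℝ) := by exact_mod_cast hd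
  have hE : (0:ℝ) < Real.exp 1 := Real.exp_pos 1
  -- M = n! / ∏ k_j!
  have hspec : ((∏ j, (k j).factorial : ℕ) : ℝ) * (Nat.multinomial univ k : ℝ)
      = (n.factorial : ℝ) := by
    exact_mod_cast congrArg (fun m : ℕ => (m:ℝ)) (Nat.multinomial_spec univ k)
  have hprodpos : (0:ℝ) < ((∏ j, (k j).factorial : ℕ) : ℝ) := by
    have : 0 < ∏ j, (k j).factorial := Finset.prod_pos (fun j _ => (k j).factorial_pos)
    exact_mod_cast this
  have hM : (Nat.multinomial univ k : ℝ) = (n.factorial : ℝ) / ((∏ j, (k j).factorial : ℕ):ℝ) := by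
    field_simp [hprodpos.ne'] at hspec ⊢
    linarith [hspec]
  -- lower bound the denominator
  set P : ℝ := ∏ j, (Real.sqrt (k j) * ((k j : ℝ) / Real.exp 1)^(k j)) with hP
  have hPpos : 0 < P := by
    apply Finset.prod_pos
    intro j _
    have : (0:ℝ) < (k j : ℝ) := by exact_mod_cast hk j
    positivity
  have hPle : P ≤ ((∏ j, (k j).factorial : ℕ):ℝ) := by
    push_cast
    apply Finset.prod_le_prod
    · intro j _
      have : (0:ℝ) < (k j : ℝ) := by exact_mod_cast hk j
      positivity
    · intro j _
      exact factorial_lower (k j) (hk j)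
  -- P = Q / e^n
  set Q : ℝ := ∏ j, (k j : ℝ) ^ ((k j : ℝ) + 1/2) with hQ
  have hQpos : 0 < Q := by
    apply Finset.prod_pos
    intro j _
    have : (0:ℝ) < (k j : ℝ) := by exact_mod_cast hk j
    positivity
  have hPQ : P = Q / (Real.exp 1)^n := by
    rw [hP, hQ]
    rw [eq_div_iff (by positivity)]
    rw [hn, ← Finset.prod_pow_eq_pow_sum]
    rw [← Finset.prod_mul_distrib]
    apply Finset.prod_congr rfl
    intro j _
    have hkj : (0:ℝ) < (k j : ℝ) := by exact_mod_cast hk j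
    rw [div_pow, Real.rpow_add hkj, Real.rpow_natCast]
    rw [Real.sqrt_eq_rpow]
    field_simp
  -- numerator bound
  have hnum : (n.factorial : ℝ) ≤ Real.exp 1 * Real.sqrt n * ((n:ℝ)/Real.exp 1)^n :=
    factorial_upper n hn1
  have hMle : (Nat.multinomial univ k : ℝ) ≤ (Real.exp 1 * Real.sqrt n * ((n:ℝ)/Real.exp 1)^n) / P := by
    rw [hM]
    exact div_le_div₀ (by positivity) hnum hPpos hPle
  -- simplify
  have hRQ : ((n:ℝ)/(d:ℝ)) ^ ((n:ℝ) + (d:ℝ)/2) ≤ Q := jensen_prod hd k hk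
  have hRpos : (0:ℝ) < ((n:ℝ)/(d:ℝ)) ^ ((n:ℝ) + (d:ℝ)/2) := Real.rpow_pos_of_pos (by positivity) _
  have step2 : (Real.exp 1 * Real.sqrt n * ((n:ℝ)/Real.exp 1)^n) / P
      ≤ (Real.exp 1 * Real.sqrt n * ((n:ℝ)/Real.exp 1)^n) / (((n:ℝ)/(d:ℝ)) ^ ((n:ℝ) + (d:ℝ)/2) / (Real.exp 1)^n) := by
    apply div_le_div_of_nonneg_left (by positivity) (by positivity)
    rw [hPQ]
    apply div_le_div_of_nonneg_right hRQ (by positivity) |>.trans_eq rfl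
  -- final equality
  have hfinal : (Real.exp 1 * Real.sqrt n * ((n:ℝ)/Real.exp 1)^n)
        / (((n:ℝ)/(d:ℝ)) ^ ((n:ℝ) + (d:ℝ)/2) / (Real.exp 1)^n)
      = Real.exp 1 * (d:ℝ)^((d:ℝ)/2) * (d:ℝ)^n * ((n:ℝ))^((1-(d:ℝ))/2) := by
    rw [Real.div_rpow hN.le hD.le]
    rw [Real.sqrt_eq_rpow]
    have e1 : ((n:ℝ)/Real.exp 1)^n = (n:ℝ)^(n:ℕ) / (Real.exp 1)^n := div_pow _ _ _
    rw [e1]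
    rw [show ((n:ℝ):ℝ)^(n:ℕ) = (n:ℝ)^((n:ℕ):ℝ) from (Real.rpow_natCast _ n).symm]
    rw [show ((d:ℝ))^(n:ℕ) = (d:ℝ)^((n:ℕ):ℝ) from (Real.rpow_natCast _ n).symm]
    rw [Real.rpow_add hN (n:ℝ) ((d:ℝ)/2), Real.rpow_add hD (n:ℝ) ((d:ℝ)/2),
      show (1-(d:ℝ))/2 = 1/2 - (d:ℝ)/2 by ring, Real.rpow_sub hN]
    have h1 : (0:ℝ) < (n:ℝ)^((1:ℝ)/2) := Real.rpow_pos_of_pos hN _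
    have h2 : (0:ℝ) < (n:ℝ)^((n:ℕ):ℝ) := Real.rpow_pos_of_pos hN _
    have h3 : (0:ℝ) < (n:ℝ)^((d:ℝ)/2) := Real.rpow_pos_of_pos hN _
    have h4 : (0:ℝ) < (d:ℝ)^((n:ℕ):ℝ) := Real.rpow_pos_of_pos hD _
    have h5 : (0:ℝ) < (d:ℝ)^((d:ℝ)/2) := Real.rpow_pos_of_pos hD _
    have h6 : (0:ℝ) < (Real.exp 1)^n := by positivity
    field_simp
  calc (Nat.multinomial univ k : ℝ) ≤ _ := hMle
    _ ≤ _ := step2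
    _ = _ := hfinal

lemma sum_multinomial_univ (d n : ℕ) :
    ∑ k ∈ piAntidiag (univ : Finset (Fin d)) n, Nat.multinomial univ k = d^n := by
  have h := Finset.sum_pow_eq_sum_piAntidiag (univ : Finset (Fin d)) (fun _ => (1:ℕ)) n
  simpa [Finset.card_univ] using h.symm

lemma filter_zero_eq (d n : ℕ) (j : Fin d) :
    (piAntidiag (univ : Finset (Fin d)) n).filter (fun k => k j = 0)
      = piAntidiag ((univ : Finset (Fin d)).erase j) n := by
  ext k
  simp only [mem_filter, mem_piAntidiag, mem_univ, mem_erase, ne_eq, and_true, true_and]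
  constructor
  · rintro ⟨⟨hsum, -⟩, hz⟩
    refine ⟨?_, fun i hi => fun he => hi (he ▸ hz)⟩
    rwa [Finset.sum_erase _ hz]
  · rintro ⟨hsum, hcond⟩
    have hz : k j = 0 := by
      by_contra h
      exact (hcond j h) rfl
    exact ⟨⟨by rwa [Finset.sum_erase _ hz] at hsum, fun _ _ => trivial⟩, hz⟩

lemma multinomial_erase (d : ℕ) (j : Fin d) (k : Fin d → ℕ) (hz : k j = 0) :
    Nat.multinomial (univ : Finset (Fin d)) k = Nat.multinomial (univ.erase j) k := by
  have h1 := Nat.multinomial_spec (univ : Finset (Fin d)) k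
  have h2 := Nat.multinomial_spec ((univ : Finset (Fin d)).erase j) k
  have hprod : ∏ i ∈ (univ : Finset (Fin d)).erase j, (k i).factorial
      = ∏ i ∈ (univ : Finset (Fin d)), (k i).factorial := by
    apply Finset.prod_erase
    rw [hz]; rfl
  have hsum : ∑ i ∈ (univ : Finset (Fin d)).erase j, k i = ∑ i ∈ (univ : Finset (Fin d)), k i :=
    Finset.sum_erase _ hz
  rw [hprod, hsum] at h2
  have hpos : 0 < ∏ i ∈ (univ : Finset (Fin d)), (k i).factorial :=
    Finset.prod_pos (fun i _ => (k i).factorial_pos)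
  exact Nat.eq_of_mul_eq_mul_left hpos (h1.trans h2.symm)

lemma sum_multinomial_zero (d n : ℕ) (hd : 0 < d) (j : Fin d) :
    ∑ k ∈ (piAntidiag (univ : Finset (Fin d)) n).filter (fun k => k j = 0),
      Nat.multinomial univ k = (d-1)^n := by
  rw [filter_zero_eq]
  have hcard : ((univ : Finset (Fin d)).erase j).card = d - 1 := by
    rw [Finset.card_erase_of_mem (mem_univ j), Finset.card_univ, Fintype.card_fin]
  have hzero : ∀ k ∈ piAntidiag ((univ : Finset (Fin d)).erase j) n, k j = 0 := by
    intro k hk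
    rw [mem_piAntidiag] at hk
    by_contra h
    exact (Finset.notMem_erase j univ) (hk.2 j h)
  rw [Finset.sum_congr rfl (fun k hk => multinomial_erase d j k (hzero k hk))]
  have h := Finset.sum_pow_eq_sum_piAntidiag ((univ : Finset (Fin d)).erase j) (fun _ => (1:ℕ)) n
  simpa [hcard] using h.symm

lemma sum_sq_le_sq_sum {α : Type*} (s : Finset α) (f : α → ℕ) :
    ∑ a ∈ s, (f a)^2 ≤ (∑ a ∈ s, f a)^2 := by
  calc ∑ a ∈ s, (f a)^2 ≤ ∑ a ∈ s, f a * (∑ b ∈ s, f b) := by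
        apply Finset.sum_le_sum
        intro a ha
        rw [pow_two]
        exact Nat.mul_le_mul_left _ (Finset.single_le_sum (fun b _ => Nat.zero_le _) ha)
    _ = (∑ a ∈ s, f a)^2 := by rw [← Finset.sum_mul, pow_two]

lemma half_poch (n : ℕ) : (ascPochhammer ℝ n).eval (1/2 : ℝ)
    = ((2*n).factorial : ℝ) / (4^n * (n.factorial : ℝ)) := by
  induction n with
  | zero => simp
  | succ n ih =>
    rw [ascPochhammer_succ_eval, ih]
    have h1 : (2*(n+1)) = (2*n+1) + 1 := by ring
    rw [h1]
    have e2 : (((2*n+1)+1).factorial : ℝ) = ((2*n).factorial : ℝ) * (2*n+1) * (2*n+2) := by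
      rw [Nat.factorial_succ, Nat.factorial_succ]
      push_cast
      ring
    rw [e2, Nat.factorial_succ]
    have hf : ((n.factorial : ℝ)) ≠ 0 := by exact_mod_cast n.factorial_ne_zero
    have h4 : ((4:ℝ)^n) ≠ 0 := by positivity
    push_cast
    field_simp
    ring

lemma F_eq (d : ℕ) (hd : 0 < d) (k : Fin d → ℕ) :
    (ascPochhammer ℝ (∑ j, k j)).eval 1 * (ascPochhammer ℝ (∑ j, k j)).eval (1 / 2) /
        ((∏ j, ((k j).factorial : ℝ) ^ 2) * (d : ℝ) ^ (2 * ∑ j, k j))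
    = (Nat.centralBinom (∑ j, k j) : ℝ) * (Nat.multinomial univ k : ℝ)^2
        / (4^(∑ j, k j) * (d:ℝ)^(2 * ∑ j, k j)) := by
  set n : ℕ := ∑ j, k j with hn
  rw [ascPochhammer_eval_one, half_poch]
  have hCB : (Nat.centralBinom n : ℝ) * ((n.factorial : ℝ) * (n.factorial : ℝ)) = ((2*n).factorial : ℝ) := by
    have h0 := Nat.choose_mul_factorial_mul_factorial (show n ≤ 2*n by omega)
    have h2 : 2*n - n = n := by omega
    rw [h2] at h0
    rw [Nat.centralBinom, ← mul_assoc]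
    exact_mod_cast congrArg (fun m : ℕ => (m:ℝ)) h0
  have hM : ((∏ j, (k j).factorial : ℕ) : ℝ) * (Nat.multinomial univ k : ℝ) = (n.factorial : ℝ) := by
    exact_mod_cast congrArg (fun m : ℕ => (m:ℝ)) (Nat.multinomial_spec univ k)
  have hprod : (∏ j, ((k j).factorial : ℝ)^2) = (((∏ j, (k j).factorial : ℕ)):ℝ)^2 := by
    push_cast
    rw [← Finset.prod_pow]
  have hf : ((n.factorial : ℝ)) ≠ 0 := by exact_mod_cast n.factorial_ne_zero
  have hpf : (((∏ j, (k j).factorial : ℕ)):ℝ) ≠ 0 := by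
    have : 0 < ∏ j, (k j).factorial := Finset.prod_pos (fun j _ => (k j).factorial_pos)
    exact_mod_cast this.ne'
  have hD : ((d:ℝ))^(2*n) ≠ 0 := by
    have : (0:ℝ) < d := by exact_mod_cast hd
    positivity
  have h4 : ((4:ℝ)^n) ≠ 0 := by positivity
  have hM' : (Nat.multinomial univ k : ℝ) = (n.factorial : ℝ) / (((∏ j, (k j).factorial : ℕ)):ℝ) := by
    rw [eq_div_iff hpf]
    linear_combination hM
  rw [hprod, hM']
  field_simp
  linear_combination -hCB

lemma def_le (d n : ℕ) (hd : 0 < d) :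
    ∑ k ∈ (piAntidiag (univ : Finset (Fin d)) n).filter (fun k => ¬ ∀ j, k j ≠ 0),
      (Nat.multinomial univ k)^2 ≤ d * (d-1)^(2*n) := by
  classical
  calc ∑ k ∈ (piAntidiag (univ : Finset (Fin d)) n).filter (fun k => ¬ ∀ j, k j ≠ 0),
        (Nat.multinomial univ k)^2
      ≤ ∑ k ∈ (piAntidiag (univ : Finset (Fin d)) n).filter (fun k => ¬ ∀ j, k j ≠ 0),
        ∑ j : Fin d, (if k j = 0 then (Nat.multinomial univ k)^2 else 0) := by
        apply Finset.sum_le_sum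
        intro k hk
        rw [mem_filter] at hk
        push_neg at hk
        obtain ⟨j0, hj0⟩ := hk.2
        have h := Finset.single_le_sum
          (f := fun j => if k j = 0 then (Nat.multinomial univ k)^2 else 0)
          (fun i _ => Nat.zero_le _) (mem_univ j0)
        simpa [hj0] using h
    _ ≤ ∑ k ∈ piAntidiag (univ : Finset (Fin d)) n,
        ∑ j : Fin d, (if k j = 0 then (Nat.multinomial univ k)^2 else 0) :=
        Finset.sum_le_sum_of_subset (Finset.filter_subset _ _)
    _ = ∑ j : Fin d, ∑ k ∈ piAntidiag (univ : Finset (Fin d)) n,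
        (if k j = 0 then (Nat.multinomial univ k)^2 else 0) := Finset.sum_comm
    _ = ∑ j : Fin d, ∑ k ∈ (piAntidiag (univ : Finset (Fin d)) n).filter (fun k => k j = 0),
        (Nat.multinomial univ k)^2 := by
        apply Finset.sum_congr rfl
        intro j _
        rw [Finset.sum_filter]
    _ ≤ ∑ _j : Fin d, ((d-1)^n)^2 := by
        apply Finset.sum_le_sum
        intro j _
        calc ∑ k ∈ (piAntidiag (univ : Finset (Fin d)) n).filter (fun k => k j = 0),
              (Nat.multinomial univ k)^2
            ≤ (∑ k ∈ (piAntidiag (univ : Finset (Fin d)) n).filter (fun k => k j = 0),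
              Nat.multinomial univ k)^2 := sum_sq_le_sq_sum _ _
          _ = ((d-1)^n)^2 := by rw [sum_multinomial_zero d n hd j]
    _ = d * (d-1)^(2*n) := by
        rw [Finset.sum_const, card_univ, Fintype.card_fin, smul_eq_mul, ← pow_mul,
          mul_comm n 2]

lemma S_le (d : ℕ) (hd3 : 3 ≤ d) (n : ℕ) (hn : 1 ≤ n) :
    (∑ k ∈ piAntidiag (univ : Finset (Fin d)) n,
      (Nat.centralBinom n : ℝ) * (Nat.multinomial univ k : ℝ)^2 / (4^n * (d:ℝ)^(2*n)))
    ≤ Real.exp 1 * (d:ℝ)^((d:ℝ)/2) * (n:ℝ)^(-(d:ℝ)/2)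
      + d * ((((d:ℝ)-1)/(d:ℝ))^2)^n := by
  classical
  have hd0 : 0 < d := by omega
  have hD : (0:ℝ) < (d:ℝ) := by exact_mod_cast hd0
  have hN : (0:ℝ) < (n:ℝ) := by exact_mod_cast hn
  have hX : (0:ℝ) < 4^n * (d:ℝ)^(2*n) := by positivity
  set Bmax : ℝ := Real.exp 1 * (d:ℝ)^((d:ℝ)/2) * (d:ℝ)^n * ((n:ℝ))^((1-(d:ℝ))/2) with hBmax
  have hBmax0 : 0 ≤ Bmax := by
    have h1 : (0:ℝ) ≤ (d:ℝ)^((d:ℝ)/2) := (Real.rpow_pos_of_pos hD _).le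
    have h2 : (0:ℝ) ≤ ((n:ℝ))^((1-(d:ℝ))/2) := (Real.rpow_pos_of_pos hN _).le
    positivity
  -- rewrite the sum
  have hsummand : ∀ k ∈ piAntidiag (univ : Finset (Fin d)) n,
      (Nat.centralBinom n : ℝ) * (Nat.multinomial univ k : ℝ)^2 / (4^n * (d:ℝ)^(2*n))
      = (Nat.multinomial univ k : ℝ)^2 * ((Nat.centralBinom n : ℝ) / (4^n * (d:ℝ)^(2*n))) := by
    intro k _; ring
  rw [Finset.sum_congr rfl hsummand, ← Finset.sum_mul]
  -- split the sum of squares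
  have hsplit : ∑ k ∈ piAntidiag (univ : Finset (Fin d)) n, (Nat.multinomial univ k : ℝ)^2
      = (∑ k ∈ (piAntidiag (univ : Finset (Fin d)) n).filter (fun k => ∀ j, k j ≠ 0),
          (Nat.multinomial univ k : ℝ)^2)
        + ∑ k ∈ (piAntidiag (univ : Finset (Fin d)) n).filter (fun k => ¬ ∀ j, k j ≠ 0),
          (Nat.multinomial univ k : ℝ)^2 :=
    (Finset.sum_filter_add_sum_filter_not _ _ _).symm
  -- full-support part
  have hfull : (∑ k ∈ (piAntidiag (univ : Finset (Fin d)) n).filter (fun k => ∀ j, k j ≠ 0),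
      (Nat.multinomial univ k : ℝ)^2) ≤ Bmax * (d:ℝ)^n := by
    calc (∑ k ∈ (piAntidiag (univ : Finset (Fin d)) n).filter (fun k => ∀ j, k j ≠ 0),
        (Nat.multinomial univ k : ℝ)^2)
        ≤ ∑ k ∈ (piAntidiag (univ : Finset (Fin d)) n).filter (fun k => ∀ j, k j ≠ 0),
          Bmax * (Nat.multinomial univ k : ℝ) := by
          apply Finset.sum_le_sum
          intro k hk
          rw [mem_filter, mem_piAntidiag] at hk
          have hsum : ∑ j, k j = n := hk.1.1
          have hk1 : ∀ j, 1 ≤ k j := fun j => Nat.one_le_iff_ne_zero.mpr (hk.2 j)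
          have hb := multinomial_full_le hd0 k hk1
          rw [hsum] at hb
          rw [pow_two]
          exact mul_le_mul_of_nonneg_right (hb.trans_eq (by rw [hBmax])) (Nat.cast_nonneg _)
      _ = Bmax * ∑ k ∈ (piAntidiag (univ : Finset (Fin d)) n).filter (fun k => ∀ j, k j ≠ 0),
          (Nat.multinomial univ k : ℝ) := by rw [Finset.mul_sum]
      _ ≤ Bmax * (d:ℝ)^n := by
          apply mul_le_mul_of_nonneg_left _ hBmax0
          have h1 : ∑ k ∈ (piAntidiag (univ : Finset (Fin d)) n).filter (fun k => ∀ j, k j ≠ 0),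
              Nat.multinomial univ k ≤ d^n := by
            calc _ ≤ ∑ k ∈ piAntidiag (univ : Finset (Fin d)) n, Nat.multinomial univ k :=
                  Finset.sum_le_sum_of_subset (Finset.filter_subset _ _)
              _ = d^n := sum_multinomial_univ d n
          calc ∑ k ∈ (piAntidiag (univ : Finset (Fin d)) n).filter (fun k => ∀ j, k j ≠ 0),
              (Nat.multinomial univ k : ℝ)
              = ((∑ k ∈ (piAntidiag (univ : Finset (Fin d)) n).filter (fun k => ∀ j, k j ≠ 0),
                Nat.multinomial univ k : ℕ) : ℝ) := (Nat.cast_sum _ _).symm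
            _ ≤ (((d^n : ℕ)):ℝ) := by exact_mod_cast h1
            _ = (d:ℝ)^n := by push_cast; ring
  -- deficient part
  have hdef : (∑ k ∈ (piAntidiag (univ : Finset (Fin d)) n).filter (fun k => ¬ ∀ j, k j ≠ 0),
      (Nat.multinomial univ k : ℝ)^2) ≤ (d:ℝ) * ((d:ℝ)-1)^(2*n) := by
    have h1 := def_le d n hd0
    have h2 : ((d * (d-1)^(2*n) : ℕ) : ℝ) = (d:ℝ) * ((d:ℝ)-1)^(2*n) := by
      have h1d : 1 ≤ d := hd0
      have e : ((d-1 : ℕ):ℝ) = (d:ℝ)-1 := by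
        simpa using (Nat.cast_sub h1d : ((d-1:ℕ):ℝ) = (d:ℝ) - (1:ℕ))
      rw [Nat.cast_mul, Nat.cast_pow, e]
    calc (∑ k ∈ (piAntidiag (univ : Finset (Fin d)) n).filter (fun k => ¬ ∀ j, k j ≠ 0),
        (Nat.multinomial univ k : ℝ)^2)
        = ((∑ k ∈ (piAntidiag (univ : Finset (Fin d)) n).filter (fun k => ¬ ∀ j, k j ≠ 0),
          (Nat.multinomial univ k)^2 : ℕ) : ℝ) := by rw [Nat.cast_sum]; push_cast; ring
      _ ≤ ((d * (d-1)^(2*n) : ℕ) : ℝ) := by exact_mod_cast h1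
      _ = (d:ℝ) * ((d:ℝ)-1)^(2*n) := h2
  -- combine
  have hc0 : 0 ≤ (Nat.centralBinom n : ℝ) / (4^n * (d:ℝ)^(2*n)) := by positivity
  calc (∑ k ∈ piAntidiag (univ : Finset (Fin d)) n, (Nat.multinomial univ k : ℝ)^2)
        * ((Nat.centralBinom n : ℝ) / (4^n * (d:ℝ)^(2*n)))
      ≤ (Bmax * (d:ℝ)^n + (d:ℝ) * ((d:ℝ)-1)^(2*n))
        * ((Nat.centralBinom n : ℝ) / (4^n * (d:ℝ)^(2*n))) := by
        apply mul_le_mul_of_nonneg_right _ hc0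
        rw [hsplit]
        exact add_le_add hfull hdef
    _ = Bmax * (d:ℝ)^n * ((Nat.centralBinom n : ℝ) / (4^n * (d:ℝ)^(2*n)))
        + (d:ℝ) * ((d:ℝ)-1)^(2*n) * ((Nat.centralBinom n : ℝ) / (4^n * (d:ℝ)^(2*n))) := by ring
    _ ≤ Real.exp 1 * (d:ℝ)^((d:ℝ)/2) * (n:ℝ)^(-(d:ℝ)/2)
        + d * ((((d:ℝ)-1)/(d:ℝ))^2)^n := by
        apply add_le_add
        · -- full term
          have e1 : Bmax * (d:ℝ)^n * ((Nat.centralBinom n : ℝ) / (4^n * (d:ℝ)^(2*n)))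
              = (Real.exp 1 * (d:ℝ)^((d:ℝ)/2) * ((n:ℝ))^((1-(d:ℝ))/2))
                * ((Nat.centralBinom n : ℝ) / 4^n) := by
            rw [hBmax]
            have : (d:ℝ)^(2*n) = (d:ℝ)^n * (d:ℝ)^n := by rw [two_mul, pow_add]
            rw [this]
            have h4 : ((4:ℝ)^n) ≠ 0 := by positivity
            have hdn : ((d:ℝ)^n) ≠ 0 := by positivity
            field_simp
          rw [e1]
          have hle := cb_div_le n hn
          have hpos : (0:ℝ) ≤ Real.exp 1 * (d:ℝ)^((d:ℝ)/2) * ((n:ℝ))^((1-(d:ℝ))/2) := by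
            have h2 : (0:ℝ) ≤ ((n:ℝ))^((1-(d:ℝ))/2) := (Real.rpow_pos_of_pos hN _).le
            have h1 : (0:ℝ) ≤ (d:ℝ)^((d:ℝ)/2) := (Real.rpow_pos_of_pos hD _).le
            positivity
          calc (Real.exp 1 * (d:ℝ)^((d:ℝ)/2) * ((n:ℝ))^((1-(d:ℝ))/2))
                * ((Nat.centralBinom n : ℝ) / 4^n)
              ≤ (Real.exp 1 * (d:ℝ)^((d:ℝ)/2) * ((n:ℝ))^((1-(d:ℝ))/2)) * (1/Real.sqrt n) :=
                mul_le_mul_of_nonneg_left hle hpos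
            _ = Real.exp 1 * (d:ℝ)^((d:ℝ)/2) * (n:ℝ)^(-(d:ℝ)/2) := by
                have hNe : ((n:ℝ))^((1-(d:ℝ))/2) * (1/Real.sqrt n) = (n:ℝ)^(-(d:ℝ)/2) := by
                  rw [Real.sqrt_eq_rpow, mul_one_div, ← Real.rpow_sub hN]
                  congr 1
                  ring
                calc (Real.exp 1 * (d:ℝ)^((d:ℝ)/2) * ((n:ℝ))^((1-(d:ℝ))/2)) * (1/Real.sqrt n)
                    = Real.exp 1 * (d:ℝ)^((d:ℝ)/2) * (((n:ℝ))^((1-(d:ℝ))/2) * (1/Real.sqrt n)) := by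
                      ring
                  _ = Real.exp 1 * (d:ℝ)^((d:ℝ)/2) * (n:ℝ)^(-(d:ℝ)/2) := by rw [hNe]
        · -- geometric term
          have hD1 : (0:ℝ) ≤ (d:ℝ) - 1 := by
            have : (3:ℝ) ≤ (d:ℝ) := by exact_mod_cast hd3
            linarith
          have hcb1 : (Nat.centralBinom n : ℝ) / (4^n * (d:ℝ)^(2*n)) ≤ 1 / (d:ℝ)^(2*n) := by
            rw [div_le_div_iff₀ (by positivity) (by positivity)]
            have := mul_le_mul_of_nonneg_right (cb_le_four_pow n)
              (by positivity : (0:ℝ) ≤ (d:ℝ)^(2*n))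
            linarith [this]
          have hnn : (0:ℝ) ≤ (d:ℝ) * ((d:ℝ)-1)^(2*n) := by positivity
          calc (d:ℝ) * ((d:ℝ)-1)^(2*n) * ((Nat.centralBinom n : ℝ) / (4^n * (d:ℝ)^(2*n)))
              ≤ (d:ℝ) * ((d:ℝ)-1)^(2*n) * (1 / (d:ℝ)^(2*n)) :=
                mul_le_mul_of_nonneg_left hcb1 hnn
            _ = (d:ℝ) * ((((d:ℝ)-1)/(d:ℝ))^2)^n := by
                rw [← pow_mul, div_pow]
                have : ((d:ℝ))^(2*n) ≠ 0 := by positivity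
                field_simp

end LauricellaAux

/-- For every integer `d ≥ 3`, the multi-indexed family defining the Lauricella series
`F_C^{(d)}(1, 1/2; 1, …, 1; 1/d², …, 1/d²)` is summable. -/
theorem summable_lauricellaFC_family (d : ℕ) (hd : 3 ≤ d) :
    Summable (fun k : Fin d → ℕ =>
      (ascPochhammer ℝ (∑ j, k j)).eval 1 * (ascPochhammer ℝ (∑ j, k j)).eval (1 / 2) /
        ((∏ j, ((k j).factorial : ℝ) ^ 2) * (d : ℝ) ^ (2 * ∑ j, k j))) := by
  classical
  have hd0 : 0 < d := by omega
  have hD : (0:ℝ) < (d:ℝ) := by exact_mod_cast hd0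
  have hd3R : (3:ℝ) ≤ (d:ℝ) := by exact_mod_cast hd
  set F : (Fin d → ℕ) → ℝ := fun k =>
    (Nat.centralBinom (∑ j, k j) : ℝ) * (Nat.multinomial univ k : ℝ)^2
      / (4^(∑ j, k j) * (d:ℝ)^(2 * ∑ j, k j)) with hF
  have hFnonneg : ∀ k, 0 ≤ F k := by
    intro k
    rw [hF]
    positivity
  have hfun : (fun k : Fin d → ℕ =>
      (ascPochhammer ℝ (∑ j, k j)).eval 1 * (ascPochhammer ℝ (∑ j, k j)).eval (1 / 2) /
        ((∏ j, ((k j).factorial : ℝ) ^ 2) * (d : ℝ) ^ (2 * ∑ j, k j))) = F :=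
    funext (fun k => F_eq d hd0 k)
  rw [hfun]
  set S : ℕ → ℝ := fun n => ∑ k ∈ piAntidiag (univ : Finset (Fin d)) n, F k with hS
  have hSnonneg : ∀ n, 0 ≤ S n := fun n => Finset.sum_nonneg (fun k _ => hFnonneg k)
  set Eb : ℕ → ℝ := fun n => Real.exp 1 * (d:ℝ)^((d:ℝ)/2) * (n:ℝ)^(-(d:ℝ)/2)
      + d * ((((d:ℝ)-1)/(d:ℝ))^2)^n with hEb
  have hSle : ∀ n, S n ≤ Eb n := by
    intro n
    rcases Nat.eq_zero_or_pos n with h0 | h1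
    · subst h0
      have hS0 : S 0 = 1 := by
        rw [hS]
        simp only [Finset.piAntidiag_zero, Finset.sum_singleton]
        rw [hF]
        simp [Nat.multinomial, Nat.centralBinom]
      rw [hS0, hEb]
      simp only [Nat.cast_zero, pow_zero, mul_one]
      rw [Real.zero_rpow (by simp; linarith : -(d:ℝ)/2 ≠ 0), mul_zero, zero_add]
      linarith
    · have hcongr : S n = ∑ k ∈ piAntidiag (univ : Finset (Fin d)) n,
          (Nat.centralBinom n : ℝ) * (Nat.multinomial univ k : ℝ)^2 / (4^n * (d:ℝ)^(2*n)) := by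
        rw [hS]
        apply Finset.sum_congr rfl
        intro k hk
        rw [Finset.mem_piAntidiag] at hk
        have hkn : (∑ j, k j) = n := hk.1
        simp only [hF]
        rw [hkn]
      rw [hcongr, hEb]
      exact S_le d hd n h1
  have hr0 : (0:ℝ) ≤ (((d:ℝ)-1)/(d:ℝ))^2 := by positivity
  have hrlt : (((d:ℝ)-1)/(d:ℝ))^2 < 1 := by
    have h1 : ((d:ℝ)-1)/(d:ℝ) < 1 := (div_lt_one hD).mpr (by linarith)
    have h0' : (0:ℝ) ≤ ((d:ℝ)-1)/(d:ℝ) := div_nonneg (by linarith) hD.le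
    exact pow_lt_one₀ h0' h1 two_ne_zero
  have hEbsum : Summable Eb := by
    rw [hEb]
    apply Summable.add
    · apply Summable.mul_left
      apply Real.summable_nat_rpow.mpr
      linarith
    · exact (summable_geometric_of_lt_one hr0 hrlt).mul_left _
  have hSsum : Summable S := Summable.of_nonneg_of_le hSnonneg hSle hEbsum
  apply summable_of_sum_le (fun k => hFnonneg k)
  intro u
  set m := u.sup (fun k => ∑ j, k j) with hm
  have hsub : u ⊆ (Finset.range (m+1)).biUnion
      (fun n => piAntidiag (univ : Finset (Fin d)) n) := by
    intro k hk
    apply Finset.mem_biUnion.mpr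
    refine ⟨∑ j, k j, Finset.mem_range.mpr (Nat.lt_succ_of_le (Finset.le_sup hk)), ?_⟩
    rw [Finset.mem_piAntidiag]
    exact ⟨rfl, fun i _ => Finset.mem_univ i⟩
  have hdisj : (↑(Finset.range (m+1)) : Set ℕ).PairwiseDisjoint
      (fun n => piAntidiag (univ : Finset (Fin d)) n) := by
    intro a _ b _ hab
    simp only [Function.onFun]
    rw [Finset.disjoint_left]
    intro k hka hkb
    rw [Finset.mem_piAntidiag] at hka hkb
    exact hab (hka.1.symm.trans hkb.1)
  calc ∑ k ∈ u, F k
      ≤ ∑ k ∈ (Finset.range (m+1)).biUnion (fun n => piAntidiag (univ : Finset (Fin d)) n),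
        F k := Finset.sum_le_sum_of_subset_of_nonneg hsub (fun k _ _ => hFnonneg k)
    _ = ∑ n ∈ Finset.range (m+1), S n := Finset.sum_biUnion hdisj
    _ ≤ ∑' n, S n := Summable.sum_le_tsum _ (fun n _ => hSnonneg n) hSsum
end
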